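/- arXiv:1502.05200 — 6 statements merged into one kernel-verified Lean document; each statement's English description precedes it below -/
import Mathlib

section
/- Let H be a 4×4 complex skew-Hermitian matrix and let Q = 𝐣⊗𝐣. Then there exists a real number φ₀ such that Hᵀ·Q + Q·H = (i·φ₀)·Q if and only if H lies in the real span 𝔡 = span_ℝ{ i·(𝟙⊗𝟙), 𝐢⊗𝟙, 𝐣⊗𝟙, 𝐤⊗𝟙, 𝟙⊗𝐢, 𝟙⊗𝐣, 𝟙⊗𝐤 }. -/
open Matrix Kronecker Complex

noncomputable section

/-- The 2×2 identity matrix 𝟙. -/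
def m1 : Matrix (Fin 2) (Fin 2) ℂ := 1
/-- The quaternion unit 𝐢 as a 2×2 complex matrix. -/
def mI : Matrix (Fin 2) (Fin 2) ℂ := !![0, Complex.I; Complex.I, 0]
/-- The quaternion unit 𝐣 as a 2×2 complex matrix. -/
def mJ : Matrix (Fin 2) (Fin 2) ℂ := !![0, -1; 1, 0]
/-- The quaternion unit 𝐤 as a 2×2 complex matrix. -/
def mK : Matrix (Fin 2) (Fin 2) ℂ := !![Complex.I, 0; 0, -Complex.I]

/-- K̂ = (i/2)(𝐢⊗𝐢 + 𝐣⊗𝐣 + 𝐤⊗𝐤). -/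
def Khat : Matrix (Fin 2 × Fin 2) (Fin 2 × Fin 2) ℂ :=
  (Complex.I / 2) • (mI ⊗ₖ mI + mJ ⊗ₖ mJ + mK ⊗ₖ mK)

/-- X̂₀ = (1/(γₙ+γₑ))(−γₙ·𝐢⊗𝟙 + γₑ·𝟙⊗𝐢). -/
def Xhat0 (γn γe : ℝ) : Matrix (Fin 2 × Fin 2) (Fin 2 × Fin 2) ℂ :=
  (γn + γe)⁻¹ • ((-γn) • (mI ⊗ₖ m1) + γe • (m1 ⊗ₖ mI))

/-- Ŷ₀ = (1/(γₙ+γₑ))(γₙ·𝐣⊗𝟙 − γₑ·𝟙⊗𝐣). -/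
def Yhat0 (γn γe : ℝ) : Matrix (Fin 2 × Fin 2) (Fin 2 × Fin 2) ℂ :=
  (γn + γe)⁻¹ • (γn • (mJ ⊗ₖ m1) + (-γe) • (m1 ⊗ₖ mJ))

/-- Ẑ₀ = (1/(γₙ+γₑ))(−γₙ·𝐤⊗𝟙 + γₑ·𝟙⊗𝐤). -/
def Zhat0 (γn γe : ℝ) : Matrix (Fin 2 × Fin 2) (Fin 2 × Fin 2) ℂ :=
  (γn + γe)⁻¹ • ((-γn) • (mK ⊗ₖ m1) + γe • (m1 ⊗ₖ mK))

/-- X̂ = X̂₀ + κ·K̂. -/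
def Xhat (γn γe κ : ℝ) : Matrix (Fin 2 × Fin 2) (Fin 2 × Fin 2) ℂ := Xhat0 γn γe + κ • Khat
/-- Ŷ = Ŷ₀ + κ·K̂. -/
def Yhat (γn γe κ : ℝ) : Matrix (Fin 2 × Fin 2) (Fin 2 × Fin 2) ℂ := Yhat0 γn γe + κ • Khat
/-- Ẑ = Ẑ₀ + κ·K̂. -/
def Zhat (γn γe κ : ℝ) : Matrix (Fin 2 × Fin 2) (Fin 2 × Fin 2) ℂ := Zhat0 γn γe + κ • Khat

/-- K̂_X = (i/2)(−𝐣⊗𝐤 + 𝐤⊗𝐣). -/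
def KhatX : Matrix (Fin 2 × Fin 2) (Fin 2 × Fin 2) ℂ :=
  (Complex.I / 2) • (-(mJ ⊗ₖ mK) + mK ⊗ₖ mJ)
/-- K̂_Y = (i/2)(𝐤⊗𝐢 − 𝐢⊗𝐤). -/
def KhatY : Matrix (Fin 2 × Fin 2) (Fin 2 × Fin 2) ℂ :=
  (Complex.I / 2) • (mK ⊗ₖ mI - mI ⊗ₖ mK)
/-- K̂_Z = (i/2)(−𝐢⊗𝐣 + 𝐣⊗𝐢). -/
def KhatZ : Matrix (Fin 2 × Fin 2) (Fin 2 × Fin 2) ℂ :=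
  (Complex.I / 2) • (-(mI ⊗ₖ mJ) + mJ ⊗ₖ mI)
/-- K̂_XX = −(i/2)(𝐣⊗𝐣 + 𝐤⊗𝐤). -/
def KhatXX : Matrix (Fin 2 × Fin 2) (Fin 2 × Fin 2) ℂ :=
  (-(Complex.I / 2)) • (mJ ⊗ₖ mJ + mK ⊗ₖ mK)
/-- K̂_YY = −(i/2)(𝐢⊗𝐢 + 𝐤⊗𝐤). -/
def KhatYY : Matrix (Fin 2 × Fin 2) (Fin 2 × Fin 2) ℂ :=
  (-(Complex.I / 2)) • (mI ⊗ₖ mI + mK ⊗ₖ mK)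
/-- K̂_ZZ = −(i/2)(𝐢⊗𝐢 + 𝐣⊗𝐣). -/
def KhatZZ : Matrix (Fin 2 × Fin 2) (Fin 2 × Fin 2) ℂ :=
  (-(Complex.I / 2)) • (mI ⊗ₖ mI + mJ ⊗ₖ mJ)
/-- L̂_X = −(1/4)(𝐢⊗𝟙 + 𝟙⊗𝐢). -/
def LhatX : Matrix (Fin 2 × Fin 2) (Fin 2 × Fin 2) ℂ :=
  (-(1 / 4 : ℝ)) • (mI ⊗ₖ m1 + m1 ⊗ₖ mI)
/-- L̂_Y = (1/4)(𝐣⊗𝟙 + 𝟙⊗𝐣). -/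
def LhatY : Matrix (Fin 2 × Fin 2) (Fin 2 × Fin 2) ℂ :=
  ((1 / 4 : ℝ)) • (mJ ⊗ₖ m1 + m1 ⊗ₖ mJ)
/-- L̂_Z = −(1/4)(𝐤⊗𝟙 + 𝟙⊗𝐤). -/
def LhatZ : Matrix (Fin 2 × Fin 2) (Fin 2 × Fin 2) ℂ :=
  (-(1 / 4 : ℝ)) • (mK ⊗ₖ m1 + m1 ⊗ₖ mK)
/-- X̂_KK = (1/2)(𝐢⊗𝟙 − 𝟙⊗𝐢). -/
def XhatKK : Matrix (Fin 2 × Fin 2) (Fin 2 × Fin 2) ℂ :=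
  ((1 / 2 : ℝ)) • (mI ⊗ₖ m1 - m1 ⊗ₖ mI)
/-- Ŷ_KK = (1/2)(−𝐣⊗𝟙 + 𝟙⊗𝐣). -/
def YhatKK : Matrix (Fin 2 × Fin 2) (Fin 2 × Fin 2) ℂ :=
  ((1 / 2 : ℝ)) • (-(mJ ⊗ₖ m1) + m1 ⊗ₖ mJ)
/-- Ẑ_KK = (1/2)(𝐤⊗𝟙 − 𝟙⊗𝐤). -/
def ZhatKK : Matrix (Fin 2 × Fin 2) (Fin 2 × Fin 2) ℂ :=
  ((1 / 2 : ℝ)) • (mK ⊗ₖ m1 - m1 ⊗ₖ mK)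
/-- K̂_XY = −(i/(2(γₙ+γₑ)))(γₙ·𝐢⊗𝐣 + γₑ·𝐣⊗𝐢) − (κ/2)(𝐢⊗𝟙 − 𝟙⊗𝐢). -/
def KhatXY (γn γe κ : ℝ) : Matrix (Fin 2 × Fin 2) (Fin 2 × Fin 2) ℂ :=
  (-(Complex.I / (2 * ((γn : ℂ) + (γe : ℂ))))) •
      ((γn : ℂ) • (mI ⊗ₖ mJ) + (γe : ℂ) • (mJ ⊗ₖ mI)) -
    (κ / 2 : ℝ) • (mI ⊗ₖ m1 - m1 ⊗ₖ mI)
/-- K̂_YZ = −(i/(2(γₙ+γₑ)))(γₙ·𝐣⊗𝐤 + γₑ·𝐤⊗𝐣) − (κ/2)(−𝐣⊗𝟙 + 𝟙⊗𝐣). -/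
def KhatYZ (γn γe κ : ℝ) : Matrix (Fin 2 × Fin 2) (Fin 2 × Fin 2) ℂ :=
  (-(Complex.I / (2 * ((γn : ℂ) + (γe : ℂ))))) •
      ((γn : ℂ) • (mJ ⊗ₖ mK) + (γe : ℂ) • (mK ⊗ₖ mJ)) -
    (κ / 2 : ℝ) • (-(mJ ⊗ₖ m1) + m1 ⊗ₖ mJ)
/-- K̂_ZX = (i/(2(γₙ+γₑ)))(γₙ·𝐤⊗𝐢 + γₑ·𝐢⊗𝐤) − (κ/2)(𝐤⊗𝟙 − 𝟙⊗𝐤). -/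
def KhatZX (γn γe κ : ℝ) : Matrix (Fin 2 × Fin 2) (Fin 2 × Fin 2) ℂ :=
  ((Complex.I / (2 * ((γn : ℂ) + (γe : ℂ))))) •
      ((γn : ℂ) • (mK ⊗ₖ mI) + (γe : ℂ) • (mI ⊗ₖ mK)) -
    (κ / 2 : ℝ) • (mK ⊗ₖ m1 - m1 ⊗ₖ mK)

lemma my_auxL (A : Matrix (Fin 2) (Fin 2) ℂ) (h : Aᵀ * mJ + mJ * A = 0) :
    (A ⊗ₖ m1)ᵀ * (mJ ⊗ₖ mJ) + (mJ ⊗ₖ mJ) * (A ⊗ₖ m1) = 0 := by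
  have h1 : m1ᵀ * mJ = mJ * m1 := by simp [m1]
  rw [← Matrix.kroneckerMap_transpose, ← Matrix.mul_kronecker_mul, ← Matrix.mul_kronecker_mul,
    h1, ← Matrix.add_kronecker, h, Matrix.zero_kronecker]

lemma my_auxR (A : Matrix (Fin 2) (Fin 2) ℂ) (h : Aᵀ * mJ + mJ * A = 0) :
    (m1 ⊗ₖ A)ᵀ * (mJ ⊗ₖ mJ) + (mJ ⊗ₖ mJ) * (m1 ⊗ₖ A) = 0 := by
  have h1 : m1ᵀ * mJ = mJ * m1 := by simp [m1]
  rw [← Matrix.kroneckerMap_transpose, ← Matrix.mul_kronecker_mul, ← Matrix.mul_kronecker_mul,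
    h1, ← Matrix.kronecker_add, h, Matrix.kronecker_zero]

lemma my_I : mIᵀ * mJ + mJ * mI = 0 := by
  have h : mIᵀ = mI := by ext i j; fin_cases i <;> fin_cases j <;> rfl
  rw [h]; ext i j; fin_cases i <;> fin_cases j <;>
    simp [mI, mJ, Matrix.mul_apply, Fin.sum_univ_two]
lemma my_J : mJᵀ * mJ + mJ * mJ = 0 := by
  have h : mJᵀ = -mJ := by ext i j; fin_cases i <;> fin_cases j <;> simp [mJ]
  rw [h, neg_mul, neg_add_cancel]
lemma my_K : mKᵀ * mJ + mJ * mK = 0 := by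
  have h : mKᵀ = mK := by ext i j; fin_cases i <;> fin_cases j <;> rfl
  rw [h]; ext i j; fin_cases i <;> fin_cases j <;>
    simp [mK, mJ, Matrix.mul_apply, Fin.sum_univ_two]


theorem stmt0fwd (H : Matrix (Fin 2 × Fin 2) (Fin 2 × Fin 2) ℂ) (hH : Hᴴ = -H)
    (h : ∃ φ₀ : ℝ, Hᵀ * (mJ ⊗ₖ mJ) + (mJ ⊗ₖ mJ) * H = (Complex.I * (φ₀ : ℂ)) • (mJ ⊗ₖ mJ)) :
      H ∈ Submodule.span ℝ
        ({Complex.I • (m1 ⊗ₖ m1), mI ⊗ₖ m1, mJ ⊗ₖ m1, mK ⊗ₖ m1,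
          m1 ⊗ₖ mI, m1 ⊗ₖ mJ, m1 ⊗ₖ mK} :
          Set (Matrix (Fin 2 × Fin 2) (Fin 2 × Fin 2) ℂ)) := by
  obtain ⟨φ₀, eq⟩ := h
  have hs : ∀ r c, (starRingEnd ℂ) (H c r) = -H r c := by
    intro r c
    have := congrFun (congrFun hH r) c
    simpa [Matrix.conjTranspose_apply] using this
  have key := fun r c => congrFun (congrFun eq r) c
  have F30 : H (1 : Fin 2 × Fin 2) (0 : Fin 2 × Fin 2) = 0 := by
    have := key ((0:Fin 2),(0:Fin 2)) ((0:Fin 2),(0:Fin 2))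
    simpa [Matrix.mul_apply, Fintype.sum_prod_type, Fin.sum_univ_two, mJ,
      Matrix.kroneckerMap_apply, Prod.mk_zero_zero, Prod.mk_one_one] using this
  have F21 : H ((1,0) : Fin 2 × Fin 2) ((0,1) : Fin 2 × Fin 2) = 0 := by
    have := key ((0:Fin 2),(1:Fin 2)) ((0:Fin 2),(1:Fin 2))
    simpa [Matrix.mul_apply, Fintype.sum_prod_type, Fin.sum_univ_two, mJ,
      Matrix.kroneckerMap_apply] using this
  have F12 : H ((0,1) : Fin 2 × Fin 2) ((1,0) : Fin 2 × Fin 2) = 0 := by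
    have := key ((1:Fin 2),(0:Fin 2)) ((1:Fin 2),(0:Fin 2))
    simpa [Matrix.mul_apply, Fintype.sum_prod_type, Fin.sum_univ_two, mJ,
      Matrix.kroneckerMap_apply] using this
  have F03 : H (0 : Fin 2 × Fin 2) (1 : Fin 2 × Fin 2) = 0 := by
    have := key ((1:Fin 2),(1:Fin 2)) ((1:Fin 2),(1:Fin 2))
    simpa [Matrix.mul_apply, Fintype.sum_prod_type, Fin.sum_univ_two, mJ,
      Matrix.kroneckerMap_apply, Prod.mk_zero_zero, Prod.mk_one_one] using this
  have F31 : H (1 : Fin 2 × Fin 2) ((0,1) : Fin 2 × Fin 2)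
      = H ((1,0) : Fin 2 × Fin 2) (0 : Fin 2 × Fin 2) := by
    have := key ((0:Fin 2),(0:Fin 2)) ((0:Fin 2),(1:Fin 2))
    simp [Matrix.mul_apply, Fintype.sum_prod_type, Fin.sum_univ_two, mJ,
      Matrix.kroneckerMap_apply] at this
    linear_combination this
  have F32 : H (1 : Fin 2 × Fin 2) ((1,0) : Fin 2 × Fin 2)
      = H ((0,1) : Fin 2 × Fin 2) (0 : Fin 2 × Fin 2) := by
    have := key ((0:Fin 2),(0:Fin 2)) ((1:Fin 2),(0:Fin 2))
    simp [Matrix.mul_apply, Fintype.sum_prod_type, Fin.sum_univ_two, mJ,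
      Matrix.kroneckerMap_apply] at this
    linear_combination this
  have F23 : H ((1,0) : Fin 2 × Fin 2) (1 : Fin 2 × Fin 2)
      = H (0 : Fin 2 × Fin 2) ((0,1) : Fin 2 × Fin 2) := by
    have := key ((0:Fin 2),(1:Fin 2)) ((1:Fin 2),(1:Fin 2))
    simp [Matrix.mul_apply, Fintype.sum_prod_type, Fin.sum_univ_two, mJ,
      Matrix.kroneckerMap_apply] at this
    linear_combination -this
  have F13 : H ((0,1) : Fin 2 × Fin 2) (1 : Fin 2 × Fin 2)
      = H (0 : Fin 2 × Fin 2) ((1,0) : Fin 2 × Fin 2) := by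
    have := key ((1:Fin 2),(0:Fin 2)) ((1:Fin 2),(1:Fin 2))
    simp [Matrix.mul_apply, Fintype.sum_prod_type, Fin.sum_univ_two, mJ,
      Matrix.kroneckerMap_apply] at this
    linear_combination -this
  have E9 : H (0 : Fin 2 × Fin 2) (0 : Fin 2 × Fin 2)
      + H (1 : Fin 2 × Fin 2) (1 : Fin 2 × Fin 2) = Complex.I * φ₀ := by
    have := key ((0:Fin 2),(0:Fin 2)) ((1:Fin 2),(1:Fin 2))
    simpa [Matrix.mul_apply, Fintype.sum_prod_type, Fin.sum_univ_two, mJ,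
      Matrix.kroneckerMap_apply, Prod.mk_zero_zero, Prod.mk_one_one] using this
  have E10 : H ((0,1) : Fin 2 × Fin 2) ((0,1) : Fin 2 × Fin 2)
      + H ((1,0) : Fin 2 × Fin 2) ((1,0) : Fin 2 × Fin 2) = Complex.I * φ₀ := by
    have := key ((0:Fin 2),(1:Fin 2)) ((1:Fin 2),(0:Fin 2))
    simp [Matrix.mul_apply, Fintype.sum_prod_type, Fin.sum_univ_two, mJ,
      Matrix.kroneckerMap_apply] at this
    linear_combination -this
  have hd : ∀ p : Fin 2 × Fin 2, H p p = ((H p p).im : ℂ) * Complex.I := by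
    intro p
    have h1 := congrArg Complex.re (hs p p)
    simp at h1
    apply Complex.ext <;> simp <;> linarith
  have hoff : ∀ p q : Fin 2 × Fin 2,
      H q p = -((H p q).re : ℂ) + ((H p q).im : ℂ) * Complex.I := by
    intro p q
    have h1 := congrArg Complex.re (hs q p)
    have h2 := congrArg Complex.im (hs q p)
    simp at h1 h2
    apply Complex.ext <;> simp <;> linarith
  set h0 : ℝ := (H (0 : Fin 2 × Fin 2) (0 : Fin 2 × Fin 2)).im with hh0
  set h1 : ℝ := (H ((0,1) : Fin 2 × Fin 2) ((0,1) : Fin 2 × Fin 2)).im with hh1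
  set h2 : ℝ := (H ((1,0) : Fin 2 × Fin 2) ((1,0) : Fin 2 × Fin 2)).im with hh2
  set h3 : ℝ := (H (1 : Fin 2 × Fin 2) (1 : Fin 2 × Fin 2)).im with hh3
  have G9 : h0 + h3 = φ₀ := by
    have := congrArg Complex.im E9; simpa using this
  have G10 : h1 + h2 = φ₀ := by
    have := congrArg Complex.im E10; simpa using this
  set a : ℝ := φ₀ / 2 with ha
  set d : ℝ := (h0 - h2) / 2 with hd'
  set g : ℝ := (h0 - h1) / 2 with hg'
  set b : ℝ := (H (0 : Fin 2 × Fin 2) ((1,0) : Fin 2 × Fin 2)).im with hb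
  set c : ℝ := -(H (0 : Fin 2 × Fin 2) ((1,0) : Fin 2 × Fin 2)).re with hc
  set e : ℝ := (H (0 : Fin 2 × Fin 2) ((0,1) : Fin 2 × Fin 2)).im with he
  set f : ℝ := -(H (0 : Fin 2 × Fin 2) ((0,1) : Fin 2 × Fin 2)).re with hf
  have ra0 : a + d + g = h0 := by rw [ha, hd', hg']; linarith
  have ra1 : a + d - g = h1 := by rw [ha, hd', hg']; linarith
  have ra2 : a - d + g = h2 := by rw [ha, hd', hg']; linarith
  have ra3 : a - d - g = h3 := by rw [ha, hd', hg']; linarith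
  have hrep : H = a • (Complex.I • (m1 ⊗ₖ m1)) + b • (mI ⊗ₖ m1) + c • (mJ ⊗ₖ m1)
      + d • (mK ⊗ₖ m1) + e • (m1 ⊗ₖ mI) + f • (m1 ⊗ₖ mJ) + g • (m1 ⊗ₖ mK) := by
    ext ⟨i, j⟩ ⟨k, l⟩
    fin_cases i <;> fin_cases j <;> fin_cases k <;> fin_cases l <;>
      simp [Matrix.kroneckerMap_apply, m1, mI, mJ, mK, Matrix.one_apply, Matrix.smul_apply,
        smul_eq_mul, Prod.mk_zero_zero, Prod.mk_one_one,
        show (0:Fin 2 × Fin 2) ≠ ((0,1) : Fin 2 × Fin 2) from by decide,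
        show (0:Fin 2 × Fin 2) ≠ ((1,0) : Fin 2 × Fin 2) from by decide,
        show (1:Fin 2 × Fin 2) ≠ ((0,1) : Fin 2 × Fin 2) from by decide,
        show (1:Fin 2 × Fin 2) ≠ ((1,0) : Fin 2 × Fin 2) from by decide]
    · rw [hd 0, ← hh0, ← ra0]; push_cast; ring
    · rw [he, hf]; apply Complex.ext <;> simp
    · rw [hb, hc]; apply Complex.ext <;> simp
    · exact F03
    · rw [hoff 0 (0,1), he, hf]; push_cast; ring
    · rw [hd (0,1), ← hh1, ← ra1]; push_cast; ring
    · exact F12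
    · rw [F13, hb, hc]; apply Complex.ext <;> simp
    · rw [hoff 0 (1,0), hb, hc]; push_cast; ring
    · exact F21
    · rw [hd (1,0), ← hh2, ← ra2]; push_cast; ring
    · rw [F23, he, hf]; apply Complex.ext <;> simp
    · exact F30
    · rw [F31, hoff 0 (1,0), hb, hc]; push_cast; ring
    · rw [F32, hoff 0 (0,1), he, hf]; push_cast; ring
    · rw [hd 1, ← hh3, ← ra3]; push_cast; ring
  rw [hrep]
  have mem : ∀ x ∈ ({Complex.I • (m1 ⊗ₖ m1), mI ⊗ₖ m1, mJ ⊗ₖ m1, mK ⊗ₖ m1,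
      m1 ⊗ₖ mI, m1 ⊗ₖ mJ, m1 ⊗ₖ mK} : Set (Matrix (Fin 2 × Fin 2) (Fin 2 × Fin 2) ℂ)),
      x ∈ Submodule.span ℝ ({Complex.I • (m1 ⊗ₖ m1), mI ⊗ₖ m1, mJ ⊗ₖ m1, mK ⊗ₖ m1,
      m1 ⊗ₖ mI, m1 ⊗ₖ mJ, m1 ⊗ₖ mK} : Set (Matrix (Fin 2 × Fin 2) (Fin 2 × Fin 2) ℂ)) :=
    fun x hx => Submodule.subset_span hx
  refine Submodule.add_mem _ (Submodule.add_mem _ (Submodule.add_mem _ (Submodule.add_mem _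
    (Submodule.add_mem _ (Submodule.add_mem _ (Submodule.smul_mem _ _ (mem _ (by simp)))
    (Submodule.smul_mem _ _ (mem _ (by simp)))) (Submodule.smul_mem _ _ (mem _ (by simp))))
    (Submodule.smul_mem _ _ (mem _ (by simp)))) (Submodule.smul_mem _ _ (mem _ (by simp))))
    (Submodule.smul_mem _ _ (mem _ (by simp)))) (Submodule.smul_mem _ _ (mem _ (by simp)))

theorem stmt0bwd (H : Matrix (Fin 2 × Fin 2) (Fin 2 × Fin 2) ℂ)
    (hm : H ∈ Submodule.span ℝ
        ({Complex.I • (m1 ⊗ₖ m1), mI ⊗ₖ m1, mJ ⊗ₖ m1, mK ⊗ₖ m1,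
          m1 ⊗ₖ mI, m1 ⊗ₖ mJ, m1 ⊗ₖ mK} :
          Set (Matrix (Fin 2 × Fin 2) (Fin 2 × Fin 2) ℂ))) :
    (∃ φ₀ : ℝ, Hᵀ * (mJ ⊗ₖ mJ) + (mJ ⊗ₖ mJ) * H = (Complex.I * (φ₀ : ℂ)) • (mJ ⊗ₖ mJ)) := by
  induction hm using Submodule.span_induction with
  | mem x hx =>
    rcases hx with h | h | h | h | h | h | h <;> subst h
    · refine ⟨2, ?_⟩
      simp only [m1]
      rw [Matrix.transpose_smul, Matrix.one_kronecker_one, Matrix.smul_mul, Matrix.mul_smul,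
        Matrix.transpose_one, one_mul, mul_one, ← add_smul]
      congr 1
      push_cast
      ring
    · exact ⟨0, by rw [my_auxL mI my_I]; norm_num⟩
    · exact ⟨0, by rw [my_auxL mJ my_J]; norm_num⟩
    · exact ⟨0, by rw [my_auxL mK my_K]; norm_num⟩
    · exact ⟨0, by rw [my_auxR mI my_I]; norm_num⟩
    · exact ⟨0, by rw [my_auxR mJ my_J]; norm_num⟩
    · exact ⟨0, by rw [my_auxR mK my_K]; norm_num⟩
  | zero => exact ⟨0, by norm_num⟩
  | add x y _ _ hx hy =>
    obtain ⟨φ, hφ⟩ := hx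
    obtain ⟨ψ, hψ⟩ := hy
    refine ⟨φ + ψ, ?_⟩
    rw [Matrix.transpose_add, add_mul, mul_add, add_add_add_comm, hφ, hψ, ← add_smul]
    congr 1
    push_cast
    ring
  | smul r x _ hx =>
    obtain ⟨φ, hφ⟩ := hx
    refine ⟨r * φ, ?_⟩
    rw [Matrix.transpose_smul, Matrix.smul_mul, Matrix.mul_smul, ← smul_add, hφ,
      ← algebraMap_smul ℂ r, smul_smul]
    congr 1
    push_cast
    simp [Complex.real_smul]
    ring

/-- A skew-Hermitian `H` satisfies `Hᵀ·Q + Q·H = (i·φ₀)·Q` for some real `φ₀`,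
where `Q = 𝐣⊗𝐣`, if and only if `H` lies in the real span
𝔡 = span_ℝ{ i·(𝟙⊗𝟙), 𝐢⊗𝟙, 𝐣⊗𝟙, 𝐤⊗𝟙, 𝟙⊗𝐢, 𝟙⊗𝐣, 𝟙⊗𝐤 }. -/
theorem stmt0 (H : Matrix (Fin 2 × Fin 2) (Fin 2 × Fin 2) ℂ) (hH : Hᴴ = -H) :
    (∃ φ₀ : ℝ, Hᵀ * (mJ ⊗ₖ mJ) + (mJ ⊗ₖ mJ) * H = (Complex.I * (φ₀ : ℂ)) • (mJ ⊗ₖ mJ)) ↔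
      H ∈ Submodule.span ℝ
        ({Complex.I • (m1 ⊗ₖ m1), mI ⊗ₖ m1, mJ ⊗ₖ m1, mK ⊗ₖ m1,
          m1 ⊗ₖ mI, m1 ⊗ₖ mJ, m1 ⊗ₖ mK} :
          Set (Matrix (Fin 2 × Fin 2) (Fin 2 × Fin 2) ℂ)) :=
  ⟨stmt0fwd H hH, stmt0bwd H⟩
end
end

section
/- The image of the real span 𝔡 = span_ℝ{ i·(𝟙⊗𝟙), 𝐢⊗𝟙, 𝐣⊗𝟙, 𝐤⊗𝟙, 𝟙⊗𝐢, 𝟙⊗𝐣, 𝟙⊗𝐤 } under the matrix exponential equals the set of all Kronecker products of 2×2 unitary matrices: { exp H : H ∈ 𝔡 } = { A ⊗ B : A, B ∈ U(2) }. -/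
open Matrix Kronecker Complex

noncomputable section

open NormedSpace

set_option maxHeartbeats 1600000

abbrev M2 := Matrix (Fin 2) (Fin 2) ℂ
abbrev M4 := Matrix (Fin 2 × Fin 2) (Fin 2 × Fin 2) ℂ

attribute [local instance] Matrix.linftyOpNormedRing Matrix.linftyOpNormedAlgebra

-- A1: exp of t • u for u*u = -1
lemma exp_unit {n : Type*} [Fintype n] [DecidableEq n] (u : Matrix n n ℂ) (hu : u * u = -1)
    (t : ℝ) :
    NormedSpace.exp (t • u) = Real.cos t • (1 : Matrix n n ℂ) + Real.sin t • u := by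
  let φ : ℂ →ₐ[ℝ] Matrix n n ℂ := Complex.liftAux u hu
  have hφc : Continuous φ := φ.toLinearMap.continuous_of_finiteDimensional
  have h1 : (t : ℝ) • u = φ ((t : ℂ) * Complex.I) := by
    simp [φ, Complex.liftAux_apply]
  have h2 : NormedSpace.exp ((t:ℂ) * Complex.I) = Complex.exp ((t:ℂ) * Complex.I) := by
    rw [← Complex.exp_eq_exp_ℂ]
  rw [h1]; erw [← map_exp φ hφc]; rw [h2, Complex.exp_mul_I]
  have : Complex.cos t + Complex.sin t * Complex.I
      = ((Real.cos t : ℂ) + (Real.sin t : ℂ) * Complex.I) := by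
    rw [← Complex.ofReal_cos, ← Complex.ofReal_sin]
  rw [this]
  rw [map_add φ, map_mul φ]
  simp [φ, Complex.liftAux_apply, Algebra.algebraMap_eq_smul_one, Complex.liftAux_apply_I, smul_mul_assoc, Complex.cos_ofReal_re, Complex.sin_ofReal_re]


-- A2: exp of complex scalar • 1
lemma exp_scalar {n : Type*} [Fintype n] [DecidableEq n] (c : ℂ) :
    NormedSpace.exp (c • (1 : Matrix n n ℂ)) = Complex.exp c • (1 : Matrix n n ℂ) := by
  have : c • (1 : Matrix n n ℂ) = algebraMap ℂ (Matrix n n ℂ) c := by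
    simp [Algebra.algebraMap_eq_smul_one]
  rw [this]; erw [← map_exp (algebraMap ℂ (Matrix n n ℂ)) (continuous_algebraMap _ _)]; rw [
    ← Complex.exp_eq_exp_ℂ]
  simp [Algebra.algebraMap_eq_smul_one]

-- Kronecker algebra homs
def kronL : M2 →ₐ[ℂ] M4 where
  toFun A := A ⊗ₖ (1 : M2)
  map_one' := Matrix.one_kronecker_one
  map_mul' A B := by rw [← Matrix.mul_kronecker_mul, Matrix.one_mul]
  map_zero' := Matrix.zero_kronecker _
  map_add' A B := Matrix.add_kronecker _ _ _
  commutes' c := by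
    simp [Algebra.algebraMap_eq_smul_one, Matrix.smul_kronecker, Matrix.one_kronecker_one]

def kronR : M2 →ₐ[ℂ] M4 where
  toFun B := (1 : M2) ⊗ₖ B
  map_one' := Matrix.one_kronecker_one
  map_mul' A B := by rw [← Matrix.mul_kronecker_mul, Matrix.one_mul]
  map_zero' := Matrix.kronecker_zero _
  map_add' A B := Matrix.kronecker_add _ _ _
  commutes' c := by
    simp [Algebra.algebraMap_eq_smul_one, Matrix.kronecker_smul, Matrix.one_kronecker_one]

lemma exp_kronL (A : M2) : NormedSpace.exp (A ⊗ₖ (1 : M2)) = NormedSpace.exp A ⊗ₖ (1 : M2) :=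
  (map_exp kronL (kronL.toLinearMap.continuous_of_finiteDimensional) A).symm

lemma exp_kronR (B : M2) : NormedSpace.exp ((1 : M2) ⊗ₖ B) = (1 : M2) ⊗ₖ NormedSpace.exp B :=
  (map_exp kronR (kronR.toLinearMap.continuous_of_finiteDimensional) B).symm

-- A4: skew-Hermitian exp is unitary
lemma exp_mem_unitary {n : Type*} [Fintype n] [DecidableEq n] (A : Matrix n n ℂ)
    (h : Aᴴ = -A) : NormedSpace.exp A ∈ Matrix.unitaryGroup n ℂ := by
  constructor
  · show (NormedSpace.exp A)ᴴ * NormedSpace.exp A = 1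
    rw [← Matrix.exp_conjTranspose, h,
      ← Matrix.exp_add_of_commute (-A) A (Commute.neg_left rfl),
      neg_add_cancel, NormedSpace.exp_zero]
  · show NormedSpace.exp A * (NormedSpace.exp A)ᴴ = 1
    rw [← Matrix.exp_conjTranspose, h,
      ← Matrix.exp_add_of_commute A (-A) (Commute.neg_right rfl),
      add_neg_cancel, NormedSpace.exp_zero]

-- A5: unit scalar times unitary is unitary
lemma smul_mem_unitary {n : Type*} [Fintype n] [DecidableEq n] (c : ℂ) (hc : ‖c‖ = 1)
    {U : Matrix n n ℂ} (hU : U ∈ Matrix.unitaryGroup n ℂ) :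
    c • U ∈ Matrix.unitaryGroup n ℂ := by
  have hcc : star c * c = 1 := by
    rw [Complex.star_def, mul_comm, Complex.mul_conj, Complex.normSq_eq_norm_sq, hc]
    norm_num
  have h1 : Uᴴ * U = 1 := hU.1
  have h2 : U * Uᴴ = 1 := hU.2
  constructor
  · show (c • U)ᴴ * (c • U) = 1
    rw [Matrix.conjTranspose_smul, Matrix.smul_mul, Matrix.mul_smul, smul_smul, h1, hcc, one_smul]
  · show (c • U) * (c • U)ᴴ = 1
    rw [Matrix.conjTranspose_smul, Matrix.smul_mul, Matrix.mul_smul, smul_smul, h2,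
      mul_comm, hcc, one_smul]

def vq (y z w : ℝ) : M2 := y • mI + z • mJ + w • mK

lemma vq_entries (x y z w : ℝ) :
    x • m1 + vq y z w =
      !![(x : ℂ) + w * Complex.I, y * Complex.I - z;
         y * Complex.I + z, (x : ℂ) - w * Complex.I] := by
  ext i j
  fin_cases i <;> fin_cases j <;>
    simp [vq, m1, mI, mJ, mK, Matrix.one_apply, Complex.real_smul] <;> ring

lemma vq_mul_vq (y z w : ℝ) :
    vq y z w * vq y z w = (-(y ^ 2 + z ^ 2 + w ^ 2) : ℝ) • (1 : M2) := by
  ext i j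
  fin_cases i <;> fin_cases j <;>
    simp [vq, m1, mI, mJ, mK, Matrix.mul_apply, Fin.sum_univ_two, Matrix.one_apply,
      Complex.real_smul, Complex.ext_iff] <;>
    constructor <;> norm_num [← Complex.ofReal_pow] <;> ring

lemma vq_conjTranspose (y z w : ℝ) : (vq y z w)ᴴ = -(vq y z w) := by
  ext i j
  fin_cases i <;> fin_cases j <;>
    simp [vq, mI, mJ, mK, Complex.real_smul, Complex.ext_iff]

lemma vq_mem_span (y z w : ℝ) : vq y z w ∈ Submodule.span ℝ ({mI, mJ, mK} : Set M2) := by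
  refine Submodule.add_mem _ (Submodule.add_mem _ ?_ ?_) ?_ <;>
    exact Submodule.smul_mem _ _ (Submodule.subset_span (by simp))

lemma unitary_decomp {A : M2} (hA : A ∈ Matrix.unitaryGroup (Fin 2) ℂ) :
    ∃ (δ : ℝ) (P : M2), P ∈ Submodule.span ℝ ({mI, mJ, mK} : Set M2) ∧
      A = Complex.exp (δ * Complex.I) • NormedSpace.exp P := by
  -- determinant has modulus one
  have hdet : ‖A.det‖ = 1 := by
    have h := Matrix.det_of_mem_unitary hA
    have h1 : star A.det * A.det = 1 := h.1
    have : ‖A.det‖ * ‖A.det‖ = 1 := by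
      have := congrArg (‖·‖) h1
      simpa [norm_mul, Complex.norm_conj, norm_star] using this
    nlinarith [norm_nonneg A.det]
  set δ : ℝ := A.det.arg / 2 with hδ
  set e : ℂ := Complex.exp (δ * Complex.I) with he
  have habse : ‖e‖ = 1 := Complex.norm_exp_ofReal_mul_I δ
  have hee : e * e = A.det := by
    rw [he, ← Complex.exp_add, ← add_mul]
    have : (δ : ℂ) + δ = (A.det.arg : ℂ) := by
      rw [hδ]; push_cast; ring
    rw [this]
    conv_rhs => rw [← Complex.norm_mul_exp_arg_mul_I A.det, hdet]
    simp
  set c : ℂ := Complex.exp (-δ * Complex.I) with hc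
  have hce : c * e = 1 := by
    rw [hc, he, ← Complex.exp_add]
    simp [← add_mul]
  set S : M2 := c • A with hS
  have habsc : ‖c‖ = 1 := by
    rw [hc]; push_cast [← Complex.ofReal_neg]
    exact Complex.norm_exp_ofReal_mul_I (-δ)
  have hSu : S ∈ Matrix.unitaryGroup (Fin 2) ℂ := smul_mem_unitary c habsc hA
  have hdetS : S.det = 1 := by
    rw [hS, Matrix.det_smul, Fintype.card_fin]
    have : c ^ 2 * (e * e) = 1 := by
      rw [sq]
      calc c * c * (e * e) = (c * e) * (c * e) := by ring
      _ = 1 := by rw [hce]; ring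
    rw [← hee]; exact this
  have hA_eS : A = e • S := by
    rw [hS, smul_smul, mul_comm, hce, one_smul]
  have h1 : Sᴴ * S = 1 := hSu.1
  have hadj : Sᴴ = S.adjugate := by
    have h2 : S * S.adjugate = 1 := by rw [Matrix.mul_adjugate, hdetS, one_smul]
    calc Sᴴ = Sᴴ * (S * S.adjugate) := by rw [h2, mul_one]
    _ = (Sᴴ * S) * S.adjugate := by rw [Matrix.mul_assoc]
    _ = S.adjugate := by rw [h1, Matrix.one_mul]
  have h00 : (starRingEnd ℂ) (S 0 0) = S 1 1 := by
    have := congrFun (congrFun hadj 0) 0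
    simpa [Matrix.conjTranspose_apply, Matrix.adjugate_fin_two] using this
  have h01 : (starRingEnd ℂ) (S 0 1) = -(S 1 0) := by
    have := congrFun (congrFun hadj 1) 0
    simpa [Matrix.conjTranspose_apply, Matrix.adjugate_fin_two] using this
  obtain ⟨x, w, hx, hw⟩ : ∃ x w : ℝ, (S 0 0).re = x ∧ (S 0 0).im = w := ⟨_, _, rfl, rfl⟩
  obtain ⟨y, z, hy, hz⟩ : ∃ y z : ℝ, (S 0 1).im = y ∧ (S 0 1).re = -z :=
    ⟨(S 0 1).im, -(S 0 1).re, rfl, by ring⟩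
  have e00 : S 0 0 = (x : ℂ) + w * Complex.I := by
    rw [← Complex.re_add_im (S 0 0), hx, hw]
  have e01 : S 0 1 = (y : ℂ) * Complex.I - z := by
    rw [← Complex.re_add_im (S 0 1), hy, hz]; push_cast; ring
  have e10 : S 1 0 = (y : ℂ) * Complex.I + z := by
    have h := h01
    rw [← Complex.re_add_im (S 0 1), hy, hz, map_add, _root_.map_mul, Complex.conj_ofReal,
      Complex.conj_ofReal, Complex.conj_I] at h
    have h2 := h.symm
    push_cast at h2 ⊢
    linear_combination -h2
  have e11 : S 1 1 = (x : ℂ) - w * Complex.I := by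
    rw [← h00, ← Complex.re_add_im (S 0 0), hx, hw, map_add, _root_.map_mul, Complex.conj_ofReal,
      Complex.conj_ofReal, Complex.conj_I]
    ring
  have hSq : S = x • m1 + vq y z w := by
    rw [vq_entries]
    conv_lhs => rw [Matrix.eta_fin_two S]
    rw [e00, e01, e10, e11]
  have hnorm : x ^ 2 + y ^ 2 + z ^ 2 + w ^ 2 = 1 := by
    have hd : S 0 0 * S 1 1 - S 0 1 * S 1 0 = 1 := by
      rw [← Matrix.det_fin_two]; exact hdetS
    rw [e00, e01, e10, e11] at hd
    have hre := congrArg Complex.re hd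
    simp only [Complex.sub_re, Complex.add_re, Complex.mul_re, Complex.mul_im,
      Complex.ofReal_re, Complex.ofReal_im, Complex.I_re, Complex.I_im, Complex.sub_im,
      Complex.add_im, Complex.one_re] at hre
    nlinarith [hre]
  rcases eq_or_ne (y ^ 2 + z ^ 2 + w ^ 2) 0 with h0 | h0
  · have hy0 : y = 0 := by nlinarith
    have hz0 : z = 0 := by nlinarith
    have hw0 : w = 0 := by nlinarith
    have hx2 : (x - 1) * (x + 1) = 0 := by nlinarith
    have hvq0 : vq y z w = 0 := by
      rw [hy0, hz0, hw0]; simp [vq]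
    rcases mul_eq_zero.mp hx2 with hx1 | hx1
    · have hx1 : x = 1 := by linarith
      refine ⟨δ, 0, Submodule.zero_mem _, ?_⟩
      rw [NormedSpace.exp_zero, ← he, hA_eS, hSq, hx1, hvq0]
      simp [m1]
    · have hx1 : x = -1 := by linarith
      refine ⟨δ, Real.pi • mI, ?_, ?_⟩
      · exact Submodule.smul_mem _ _ (Submodule.subset_span (by simp))
      · have hmI : mI * mI = -1 := by
          ext i j
          fin_cases i <;> fin_cases j <;>
            simp [mI, Matrix.mul_apply, Fin.sum_univ_two, Matrix.one_apply, Complex.ext_iff]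
        rw [exp_unit mI hmI Real.pi, Real.cos_pi, Real.sin_pi, hA_eS, hSq, hx1, hvq0, ← he]
        simp [m1]
  · have hnn : (0:ℝ) ≤ y ^ 2 + z ^ 2 + w ^ 2 := by positivity
    set s : ℝ := Real.sqrt (y ^ 2 + z ^ 2 + w ^ 2) with hsdef
    have hs_sq : s ^ 2 = y ^ 2 + z ^ 2 + w ^ 2 := Real.sq_sqrt hnn
    have hs0 : s ≠ 0 := by
      intro h; rw [h] at hs_sq; simp at hs_sq; exact h0 hs_sq.symm
    have huu : (s⁻¹ • vq y z w) * (s⁻¹ • vq y z w) = -1 := by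
      rw [Matrix.smul_mul, Matrix.mul_smul, vq_mul_vq, smul_smul, smul_smul]
      have h1 : s⁻¹ * s = 1 := inv_mul_cancel₀ hs0
      have hcoeff : s⁻¹ * s⁻¹ * -(y ^ 2 + z ^ 2 + w ^ 2) = -1 := by
        rw [← hs_sq]
        linear_combination (-(s⁻¹ * s + 1)) * h1
      rw [hcoeff, neg_smul, one_smul]
    obtain ⟨hxl, hxr⟩ : -1 ≤ x ∧ x ≤ 1 := by
      have h := hnorm
      clear * - h
      constructor
      · nlinarith [sq_nonneg (x + 1), sq_nonneg y, sq_nonneg z, sq_nonneg w]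
      · nlinarith [sq_nonneg (x - 1), sq_nonneg y, sq_nonneg z, sq_nonneg w]
    set t : ℝ := Real.arccos x with ht
    have hcos : Real.cos t = x := Real.cos_arccos hxl hxr
    have hsin : Real.sin t = s := by
      rw [ht, Real.sin_arccos, hsdef]
      congr 1
      have h := hnorm
      clear * - h
      linarith
    refine ⟨δ, t • (s⁻¹ • vq y z w), ?_, ?_⟩
    · rw [smul_smul]
      exact Submodule.smul_mem _ _ (vq_mem_span y z w)
    · rw [exp_unit _ huu t, hcos, hsin, smul_smul, mul_inv_cancel₀ hs0, one_smul,
        hA_eS, hSq, ← he]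
      rfl

lemma span_skew {P : M2} (h : P ∈ Submodule.span ℝ ({mI, mJ, mK} : Set M2)) : Pᴴ = -P := by
  induction h using Submodule.span_induction with
  | mem x hx =>
    rcases hx with h | h | h <;> subst h <;>
      · ext i j
        fin_cases i <;> fin_cases j <;> simp [mI, mJ, mK, Complex.ext_iff]
  | zero => simp
  | add x y hx hy ihx ihy => rw [Matrix.conjTranspose_add, ihx, ihy]; abel
  | smul a x hx ihx => rw [Matrix.conjTranspose_smul, ihx, star_trivial, smul_neg]

lemma phase_exp_mem_unitary {P : M2} (h : P ∈ Submodule.span ℝ ({mI, mJ, mK} : Set M2)) (c : ℝ) :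
    Complex.exp ((c : ℂ) * Complex.I) • NormedSpace.exp P ∈ Matrix.unitaryGroup (Fin 2) ℂ :=
  smul_mem_unitary _ (Complex.norm_exp_ofReal_mul_I c) (exp_mem_unitary P (span_skew h))

lemma exp_decomp (c : ℝ) (P Q : M2) :
    NormedSpace.exp (c • (Complex.I • (m1 ⊗ₖ m1)) + P ⊗ₖ m1 + m1 ⊗ₖ Q)
      = (Complex.exp ((c : ℂ) * Complex.I) • NormedSpace.exp P) ⊗ₖ NormedSpace.exp Q := by
  have h11 : m1 ⊗ₖ m1 = (1 : M4) := by
    rw [show m1 = (1 : M2) from rfl, Matrix.one_kronecker_one]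
  have hm1 : m1 = (1 : M2) := rfl
  have hscal : c • (Complex.I • (m1 ⊗ₖ m1)) = ((c : ℂ) * Complex.I) • (1 : M4) := by
    rw [h11, ← smul_assoc, Complex.real_smul]
  have hcom1 : ∀ X : M4, Commute (((c : ℂ) * Complex.I) • (1 : M4)) X := fun X => by
    show _ = _
    rw [smul_one_mul, mul_smul_one]
  have hcom2 : Commute (P ⊗ₖ m1) (m1 ⊗ₖ Q) := by
    show _ = _
    rw [← Matrix.mul_kronecker_mul, ← Matrix.mul_kronecker_mul, hm1, Matrix.mul_one,
      Matrix.one_mul, Matrix.mul_one, Matrix.one_mul]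
  rw [hscal,
    Matrix.exp_add_of_commute _ _ ((hcom1 _).add_left hcom2),
    Matrix.exp_add_of_commute _ _ (hcom1 _),
    exp_scalar, hm1, exp_kronL, exp_kronR, smul_one_mul, Matrix.smul_mul,
    ← Matrix.mul_kronecker_mul, Matrix.mul_one, Matrix.one_mul, Matrix.smul_kronecker]

lemma kronL_mem_span {P : M2} (h : P ∈ Submodule.span ℝ ({mI, mJ, mK} : Set M2)) :
    P ⊗ₖ m1 ∈ Submodule.span ℝ
      ({Complex.I • (m1 ⊗ₖ m1), mI ⊗ₖ m1, mJ ⊗ₖ m1, mK ⊗ₖ m1,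
        m1 ⊗ₖ mI, m1 ⊗ₖ mJ, m1 ⊗ₖ mK} : Set M4) := by
  induction h using Submodule.span_induction with
  | mem x hx =>
    rcases hx with h | h | h <;> subst h <;> exact Submodule.subset_span (by simp)
  | zero => rw [Matrix.zero_kronecker]; exact Submodule.zero_mem _
  | add x y hx hy ihx ihy => rw [Matrix.add_kronecker]; exact Submodule.add_mem _ ihx ihy
  | smul a x hx ihx => rw [Matrix.smul_kronecker]; exact Submodule.smul_mem _ _ ihx

lemma kronR_mem_span {Q : M2} (h : Q ∈ Submodule.span ℝ ({mI, mJ, mK} : Set M2)) :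
    m1 ⊗ₖ Q ∈ Submodule.span ℝ
      ({Complex.I • (m1 ⊗ₖ m1), mI ⊗ₖ m1, mJ ⊗ₖ m1, mK ⊗ₖ m1,
        m1 ⊗ₖ mI, m1 ⊗ₖ mJ, m1 ⊗ₖ mK} : Set M4) := by
  induction h using Submodule.span_induction with
  | mem x hx =>
    rcases hx with h | h | h <;> subst h <;> exact Submodule.subset_span (by simp)
  | zero => rw [Matrix.kronecker_zero]; exact Submodule.zero_mem _
  | add x y hx hy ihx ihy => rw [Matrix.kronecker_add]; exact Submodule.add_mem _ ihx ihy
  | smul a x hx ihx => rw [Matrix.kronecker_smul]; exact Submodule.smul_mem _ _ ihx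


/-- the image of 𝔡 under the matrix exponential equals the set of Kronecker
products of 2×2 unitary matrices. -/
theorem stmt2 :
    {M | ∃ H ∈ Submodule.span ℝ
        ({Complex.I • (m1 ⊗ₖ m1), mI ⊗ₖ m1, mJ ⊗ₖ m1, mK ⊗ₖ m1,
          m1 ⊗ₖ mI, m1 ⊗ₖ mJ, m1 ⊗ₖ mK} :
          Set (Matrix (Fin 2 × Fin 2) (Fin 2 × Fin 2) ℂ)),
      M = NormedSpace.exp H} =
    {M | ∃ A B : Matrix (Fin 2) (Fin 2) ℂ,
      A ∈ Matrix.unitaryGroup (Fin 2) ℂ ∧ B ∈ Matrix.unitaryGroup (Fin 2) ℂ ∧ M = A ⊗ₖ B} := by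
  ext M
  simp only [Set.mem_setOf_eq]
  constructor
  · rintro ⟨H, hH, rfl⟩
    have hH' : H ∈ Submodule.span ℝ (Set.range
        ![Complex.I • (m1 ⊗ₖ m1), mI ⊗ₖ m1, mJ ⊗ₖ m1, mK ⊗ₖ m1,
          m1 ⊗ₖ mI, m1 ⊗ₖ mJ, m1 ⊗ₖ mK]) := by
      convert hH using 2
      ext x
      simp [Matrix.range_cons, Matrix.range_empty]
      tauto
    rw [Submodule.mem_span_range_iff_exists_fun] at hH'
    obtain ⟨cf, hcf⟩ := hH'
    rw [Fin.sum_univ_seven] at hcf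
    simp only [Matrix.cons_val_zero, Matrix.cons_val_one, Matrix.head_cons] at hcf
    set P : M2 := cf 1 • mI + cf 2 • mJ + cf 3 • mK with hP
    set Q : M2 := cf 4 • mI + cf 5 • mJ + cf 6 • mK with hQ
    have hPmem : P ∈ Submodule.span ℝ ({mI, mJ, mK} : Set M2) := by
      refine Submodule.add_mem _ (Submodule.add_mem _ ?_ ?_) ?_ <;>
        exact Submodule.smul_mem _ _ (Submodule.subset_span (by simp))
    have hQmem : Q ∈ Submodule.span ℝ ({mI, mJ, mK} : Set M2) := by
      refine Submodule.add_mem _ (Submodule.add_mem _ ?_ ?_) ?_ <;>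
        exact Submodule.smul_mem _ _ (Submodule.subset_span (by simp))
    have hrep : H = cf 0 • (Complex.I • (m1 ⊗ₖ m1)) + P ⊗ₖ m1 + m1 ⊗ₖ Q := by
      rw [← hcf, hP, hQ]
      simp only [Matrix.add_kronecker, Matrix.smul_kronecker, Matrix.kronecker_add,
        Matrix.kronecker_smul]
      abel
    rw [hrep, exp_decomp]
    exact ⟨_, _, phase_exp_mem_unitary hPmem (cf 0),
      exp_mem_unitary Q (span_skew hQmem), rfl⟩
  · rintro ⟨A, B, hA, hB, rfl⟩
    obtain ⟨δa, P, hP, hAeq⟩ := unitary_decomp hA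
    obtain ⟨δb, Q, hQ, hBeq⟩ := unitary_decomp hB
    refine ⟨(δa + δb) • (Complex.I • (m1 ⊗ₖ m1)) + P ⊗ₖ m1 + m1 ⊗ₖ Q, ?_, ?_⟩
    · refine Submodule.add_mem _ (Submodule.add_mem _ ?_ (kronL_mem_span hP)) (kronR_mem_span hQ)
      exact Submodule.smul_mem _ _ (Submodule.subset_span (by simp))
    · rw [exp_decomp, hAeq, hBeq]
      have hphase : Complex.exp (((δa + δb : ℝ) : ℂ) * Complex.I)
          = Complex.exp ((δa : ℂ) * Complex.I) * Complex.exp ((δb : ℂ) * Complex.I) := by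
        push_cast
        rw [add_mul, Complex.exp_add]
      rw [hphase, Matrix.smul_kronecker, Matrix.kronecker_smul, smul_smul, Matrix.smul_kronecker]
end
end

section
/- Let X and Y be n×n complex matrices. Then the real span of { exp(s·X) · Y · exp(−s·X) : s ∈ ℝ } equals the real span of { (ad X)^k Y : k ∈ ℕ }, where ad X is the operator Z ↦ XZ − ZX. In particular the commutator ⁅X,Y⁆ = XY − YX lies in the real span of { exp(s·X) · Y · exp(−s·X) : s ∈ ℝ }. -/
open Matrix

set_option maxHeartbeats 1000000

noncomputable section

open NormedSpace

section Abstract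

variable {𝔸 : Type*} [NormedRing 𝔸] [NormedAlgebra ℝ 𝔸] [CompleteSpace 𝔸]

/-- If a differentiable function takes values in a closed submodule, so does its derivative. -/
theorem aux_deriv_mem {p : Submodule ℝ 𝔸} (hp : IsClosed (p : Set 𝔸)) {f : ℝ → 𝔸} {f' : 𝔸}
    {s : ℝ} (hf : HasDerivAt f f' s) (h : ∀ t, f t ∈ p) : f' ∈ p :=
  hp.mem_of_tendsto (hasDerivAt_iff_tendsto_slope.mp hf)
    (Filter.Eventually.of_forall fun t => p.smul_mem _ (p.sub_mem (h t) (h s)))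

/-- `ad X` as a continuous linear map. -/
def adT (X : 𝔸) : 𝔸 →L[ℝ] 𝔸 :=
  ContinuousLinearMap.mul ℝ 𝔸 X - (ContinuousLinearMap.mul ℝ 𝔸).flip X

theorem adT_apply (X Z : 𝔸) : adT X Z = X * Z - Z * X := rfl

theorem adT_pow_apply (X Y : 𝔸) (k : ℕ) :
    (adT X ^ k) Y = (fun Z => X * Z - Z * X)^[k] Y := by
  induction k with
  | zero => simp
  | succ k ih =>
    rw [Function.iterate_succ_apply', pow_succ', ContinuousLinearMap.mul_apply, ih]
    rfl

/-- Left multiplication as an algebra homomorphism into continuous linear maps. -/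
def lmulA : 𝔸 →ₐ[ℝ] (𝔸 →L[ℝ] 𝔸) :=
  AlgHom.ofLinearMap (ContinuousLinearMap.mul ℝ 𝔸).toLinearMap
    (by ext z; simp) (fun x y => by ext z; simp [mul_assoc])

theorem lmulA_apply (a z : 𝔸) : (lmulA a) z = a * z := rfl

theorem lmulA_continuous : Continuous (lmulA (𝔸 := 𝔸)) :=
  (ContinuousLinearMap.mul ℝ 𝔸).continuous

/-- Right multiplication as an algebra homomorphism from the opposite algebra. -/
def rmulA : 𝔸ᵐᵒᵖ →ₐ[ℝ] (𝔸 →L[ℝ] 𝔸) :=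
  AlgHom.ofLinearMap
    { toFun := fun a => (ContinuousLinearMap.mul ℝ 𝔸).flip a.unop
      map_add' := fun a b => by ext z; simp [mul_add]
      map_smul' := fun c a => by ext z; simp }
    (by ext z; simp) (fun x y => by ext z; simp [mul_assoc])

theorem rmulA_apply (a : 𝔸ᵐᵒᵖ) (z : 𝔸) : (rmulA a) z = z * a.unop := rfl

theorem rmulA_continuous : Continuous (rmulA (𝔸 := 𝔸)) :=
  (ContinuousLinearMap.mul ℝ 𝔸).flip.continuous.comp MulOpposite.continuous_unop

theorem smul_pow_apply (T : 𝔸 →L[ℝ] 𝔸) (s : ℝ) (k : ℕ) (Y : 𝔸) :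
    ((s • T) ^ k) Y = s ^ k • ((T ^ k) Y) := by
  induction k with
  | zero => simp
  | succ k ih =>
    simp only [pow_succ', ContinuousLinearMap.mul_apply, ih, ContinuousLinearMap.smul_apply,
      T.map_smul, smul_smul]

theorem exp_adT_apply (X Y : 𝔸) (s : ℝ) :
    exp (s • adT X) Y = exp (s • X) * Y * exp (-(s • X)) := by
  set lX : 𝔸 →L[ℝ] 𝔸 := ContinuousLinearMap.mul ℝ 𝔸 X with hlX
  set rX : 𝔸 →L[ℝ] 𝔸 := (ContinuousLinearMap.mul ℝ 𝔸).flip X with hrX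
  have hsplit : s • adT X = s • lX + -(s • rX) := by
    rw [adT, smul_sub, sub_eq_add_neg]
  have hcomm : Commute (s • lX) (-(s • rX)) := by
    apply ContinuousLinearMap.ext
    intro z
    show (s • lX) ((-(s • rX)) z) = (-(s • rX)) ((s • lX) z)
    simp only [ContinuousLinearMap.smul_apply, ContinuousLinearMap.neg_apply, hlX, hrX,
      ContinuousLinearMap.mul_apply', ContinuousLinearMap.flip_apply, smul_neg, mul_neg, neg_mul, mul_smul_comm,
      smul_mul_assoc, mul_assoc, smul_smul, mul_comm s s]
  have h1 : exp (s • lX) = lmulA (exp (s • X)) := by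
    have : s • lX = lmulA (s • X) :=
      ((ContinuousLinearMap.mul ℝ 𝔸).map_smul s X).symm
    rw [this, map_exp_of_mem_ball (𝕂 := ℝ) lmulA lmulA_continuous (s • X) ((expSeries_radius_eq_top ℝ 𝔸).symm ▸ edist_lt_top _ _)]
  have h2 : exp (-(s • rX)) = rmulA (MulOpposite.op (exp (-(s • X)))) := by
    have : -(s • rX) = rmulA (MulOpposite.op (-(s • X))) := by
      show -(s • rX) = (ContinuousLinearMap.mul ℝ 𝔸).flip (-(s • X))
      rw [map_neg, _root_.map_smul]
    have hexp2 : rmulA (exp (MulOpposite.op (-(s • X))))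
        = exp (rmulA (MulOpposite.op (-(s • X)))) :=
      map_exp_of_mem_ball (𝕂 := ℝ) rmulA
        ((ContinuousLinearMap.mul ℝ 𝔸).flip.continuous.comp MulOpposite.continuous_unop) _ ((expSeries_radius_eq_top ℝ 𝔸ᵐᵒᵖ).symm ▸ edist_lt_top _ _)
    rw [this, ← hexp2, ← exp_op]
  rw [hsplit, NormedSpace.exp_add_of_commute_of_mem_ball (𝕂 := ℝ) hcomm ((expSeries_radius_eq_top ℝ (𝔸 →L[ℝ] 𝔸)).symm ▸ edist_lt_top _ _) ((expSeries_radius_eq_top ℝ (𝔸 →L[ℝ] 𝔸)).symm ▸ edist_lt_top _ _), h1, h2]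
  show exp (s • X) * (Y * (MulOpposite.op (exp (-(s • X)))).unop) = _
  rw [MulOpposite.unop_op, mul_assoc]

theorem conj_mem_span_ad [FiniteDimensional ℝ 𝔸] (X Y : 𝔸) (s : ℝ) :
    exp (s • X) * Y * exp (-(s • X)) ∈
      Submodule.span ℝ {M : 𝔸 | ∃ k : ℕ, M = (fun Z => X * Z - Z * X)^[k] Y} := by
  set p := Submodule.span ℝ {M : 𝔸 | ∃ k : ℕ, M = (fun Z => X * Z - Z * X)^[k] Y} with hp
  rw [← exp_adT_apply]
  have hsum : HasSum (fun k : ℕ => (((Nat.factorial k : ℝ))⁻¹ • (s • adT X) ^ k) Y)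
      (exp (s • adT X) Y) :=
    (exp_series_hasSum_exp' (𝕂 := ℝ) (s • adT X)).mapL (ContinuousLinearMap.apply ℝ 𝔸 Y)
  have hmem : ∀ k : ℕ, (((Nat.factorial k : ℝ))⁻¹ • (s • adT X) ^ k) Y ∈ p := by
    intro k
    have : (((Nat.factorial k : ℝ))⁻¹ • (s • adT X) ^ k) Y
        = ((Nat.factorial k : ℝ))⁻¹ • s ^ k • ((adT X ^ k) Y) := by
      rw [ContinuousLinearMap.smul_apply, smul_pow_apply]
    rw [this, adT_pow_apply]
    exact p.smul_mem _ (p.smul_mem _ (Submodule.subset_span ⟨k, rfl⟩))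
  exact (Submodule.closed_of_finiteDimensional p).mem_of_tendsto hsum.tendsto_sum_nat
    (Filter.Eventually.of_forall fun N => Submodule.sum_mem p fun k _ => hmem k)

theorem ad_mem_span_conj [FiniteDimensional ℝ 𝔸] (X Y : 𝔸) (k : ℕ) :
    (fun Z => X * Z - Z * X)^[k] Y ∈
      Submodule.span ℝ
        {M : 𝔸 | ∃ s : ℝ, M = exp (s • X) * Y * exp (-(s • X))} := by
  set p := Submodule.span ℝ
      {M : 𝔸 | ∃ s : ℝ, M = exp (s • X) * Y * exp (-(s • X))} with hp
  have key : ∀ k : ℕ, ∀ s : ℝ,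
      exp (s • X) * ((fun Z => X * Z - Z * X)^[k] Y) * exp (-(s • X)) ∈ p := by
    intro k
    induction k with
    | zero =>
      intro s
      exact Submodule.subset_span ⟨s, by simp⟩
    | succ k ih =>
      intro s
      rw [Function.iterate_succ_apply']
      set A := (fun Z => X * Z - Z * X)^[k] Y with hA
      have hu : HasDerivAt (fun t : ℝ => exp (t • X)) (exp (s • X) * X) s :=
        hasDerivAt_exp_smul_const X s
      have hv : HasDerivAt (fun t : ℝ => exp (-(t • X))) (-X * exp (-(s • X))) s := by
        have h0 : HasDerivAt (fun t : ℝ => exp (t • (-X))) (-X * exp (s • (-X))) s :=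
          hasDerivAt_exp_smul_const' (-X) s
        simpa only [smul_neg] using h0
      have hc : HasDerivAt (fun t : ℝ => exp (t • X) * A * exp (-(t • X)))
          (exp (s • X) * (X * A - A * X) * exp (-(s • X))) s := by
        have := (hu.mul_const A).mul hv
        convert this using 1
        · rfl
        simp only [mul_sub, sub_mul, mul_assoc, mul_neg, neg_mul]
        abel
      exact aux_deriv_mem (Submodule.closed_of_finiteDimensional p) hc ih
  have h0 := key k 0
  simpa using h0

end Abstract

/-- the real span of { exp(s·X)·Y·exp(−s·X) : s ∈ ℝ } equals the real span of
{ (ad X)^k Y : k ∈ ℕ }; in particular ⁅X,Y⁆ lies in the former span. -/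
theorem stmt4 (n : ℕ) (X Y : Matrix (Fin n) (Fin n) ℂ) :
    Submodule.span ℝ
        {M : Matrix (Fin n) (Fin n) ℂ | ∃ s : ℝ,
          M = NormedSpace.exp (s • X) * Y * NormedSpace.exp ((-s) • X)} =
      Submodule.span ℝ
        {M : Matrix (Fin n) (Fin n) ℂ | ∃ k : ℕ,
          M = (fun Z => X * Z - Z * X)^[k] Y} ∧
    X * Y - Y * X ∈ Submodule.span ℝ
        {M : Matrix (Fin n) (Fin n) ℂ | ∃ s : ℝ,
          M = NormedSpace.exp (s • X) * Y * NormedSpace.exp ((-s) • X)} := by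
  letI : SeminormedRing (Matrix (Fin n) (Fin n) ℂ) := Matrix.linftyOpSemiNormedRing
  letI : NormedRing (Matrix (Fin n) (Fin n) ℂ) := Matrix.linftyOpNormedRing
  letI : NormedAlgebra ℝ (Matrix (Fin n) (Fin n) ℂ) := Matrix.linftyOpNormedAlgebra
  letI : FiniteDimensional ℝ (Matrix (Fin n) (Fin n) ℂ) :=
    FiniteDimensional.trans ℝ ℂ (Matrix (Fin n) (Fin n) ℂ)
  simp only [neg_smul]
  constructor
  · apply le_antisymm
    · rw [Submodule.span_le]
      rintro M ⟨s, rfl⟩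
      exact conj_mem_span_ad X Y s
    · rw [Submodule.span_le]
      rintro M ⟨k, rfl⟩
      exact ad_mem_span_conj X Y k
  · have h := ad_mem_span_conj X Y 1
    simp at h
    exact h
end
end

section
/- Let X and Y be n×n complex matrices. Then there exist a natural number m, real numbers s₁, …, s_m ∈ [−1, 1] and real coefficients α₁, …, α_m such that XY − YX = Σ_{k=1}^{m} α_k · exp(s_k·X) · Y · exp(−s_k·X). -/
open Matrix

noncomputable section


section Aux
open NormedSpace

attribute [local instance] Matrix.linftyOpNormedAddCommGroup Matrix.linftyOpNormedRing
  Matrix.linftyOpNormedAlgebra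

theorem stmt5_aux (n : ℕ) (X Y : Matrix (Fin n) (Fin n) ℂ) :
    X * Y - Y * X ∈ Submodule.span ℝ
      ((fun t : ℝ => NormedSpace.exp (t • X) * Y * NormedSpace.exp ((-t) • X)) ''
        Set.Icc (-1 : ℝ) 1) := by
  set T : Set (Matrix (Fin n) (Fin n) ℂ) :=
    (fun t : ℝ => NormedSpace.exp (t • X) * Y * NormedSpace.exp ((-t) • X)) ''
      Set.Icc (-1 : ℝ) 1 with hT
  set S : Submodule ℝ (Matrix (Fin n) (Fin n) ℂ) := Submodule.span ℝ T with hS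
  have hgen : ∀ t ∈ Set.Icc (-1 : ℝ) 1,
      NormedSpace.exp (t • X) * Y * NormedSpace.exp ((-t) • X) ∈ S :=
    fun t ht => Submodule.subset_span ⟨t, ht, rfl⟩
  have hder : HasDerivAt
      (fun t : ℝ => NormedSpace.exp (t • X) * Y * NormedSpace.exp ((-t) • X))
      (X * Y - Y * X) 0 := by
    have h1 : HasDerivAt (fun t : ℝ => exp (t • X)) (exp ((0 : ℝ) • X) * X) 0 :=
      hasDerivAt_exp_smul_const X 0
    have h2 : HasDerivAt (fun t : ℝ => exp (t • (-X))) (exp ((0 : ℝ) • (-X)) * (-X)) 0 :=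
      hasDerivAt_exp_smul_const (-X) 0
    have h3 := (h1.mul_const Y).mul h2
    simp only [zero_smul, NormedSpace.exp_zero, one_mul, mul_one] at h3
    have heq : (fun t : ℝ => NormedSpace.exp (t • X) * Y * NormedSpace.exp ((-t) • X))
        = fun t : ℝ => exp (t • X) * Y * exp (t • (-X)) := by
      funext t
      rw [neg_smul, ← smul_neg]
    rw [heq]
    exact h3.congr_deriv (by noncomm_ring)
  have hclosed : IsClosed (S : Set (Matrix (Fin n) (Fin n) ℂ)) :=
    Submodule.closed_of_finiteDimensional S
  have htend := hasDerivAt_iff_tendsto_slope.mp hder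
  have htend' : Filter.Tendsto
      (slope (fun t : ℝ => NormedSpace.exp (t • X) * Y * NormedSpace.exp ((-t) • X)) 0)
      (nhdsWithin (0 : ℝ) (Set.Ioi 0)) (nhds (X * Y - Y * X)) :=
    htend.mono_left (nhdsWithin_mono _ (fun y hy =>
      Set.mem_compl_singleton_iff.mpr (ne_of_gt hy)))
  refine hclosed.mem_of_tendsto htend' ?_
  filter_upwards [Ioo_mem_nhdsGT_of_mem (Set.mem_Ico.mpr ⟨le_refl 0, one_pos⟩)] with y hy
  have hy1 : y ∈ Set.Icc (-1 : ℝ) 1 := ⟨by linarith [hy.1], le_of_lt hy.2⟩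
  have h0 : (0 : ℝ) ∈ Set.Icc (-1 : ℝ) 1 := ⟨by norm_num, by norm_num⟩
  have h00 : NormedSpace.exp ((0 : ℝ) • X) * Y * NormedSpace.exp ((-(0 : ℝ)) • X) ∈ S :=
    hgen 0 h0
  rw [slope_def_module]
  exact S.smul_mem _ (S.sub_mem (hgen y hy1) h00)

end Aux

/-- the commutator XY − YX is a finite real linear combination of conjugates
exp(s_k·X)·Y·exp(−s_k·X) with s_k ∈ [−1, 1]. -/
theorem stmt5 (n : ℕ) (X Y : Matrix (Fin n) (Fin n) ℂ) :
    ∃ (m : ℕ) (s α : Fin m → ℝ),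
      (∀ k, s k ∈ Set.Icc (-1 : ℝ) 1) ∧
      X * Y - Y * X =
        ∑ k, α k • (NormedSpace.exp (s k • X) * Y * NormedSpace.exp ((-(s k)) • X)) := by
  classical
  have hmem := stmt5_aux n X Y
  rw [Submodule.mem_span_set'] at hmem
  obtain ⟨m, α, g, hsum⟩ := hmem
  choose t ht hgt using fun k => (g k).2
  refine ⟨m, t, α, ht, ?_⟩
  rw [← hsum]
  refine Finset.sum_congr rfl fun k _ => ?_
  rw [← hgt k]

end
end

section
/- Let 𝔥 be a real Lie subalgebra of the n×n complex matrices (under the commutator bracket) and let X₁, …, X_N be a basis of 𝔥 as a real vector space. Then there is a neighbourhood U of 0 in the n×n complex matrices such that for every Y ∈ 𝔥 ∩ U there exist real numbers τ₁, …, τ_N with exp(Y) = exp(τ₁·X₁) · exp(τ₂·X₂) · ⋯ · exp(τ_N·X_N) (the product taken in this fixed order). -/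
open Matrix

noncomputable section

open NormedSpace
set_option linter.unusedSectionVars false
set_option linter.unusedTactic false
noncomputable section
namespace Stmt8Aux

variable {E : Type*} [NormedRing E] [NormedAlgebra ℝ E] [CompleteSpace E]

instance ratNormedAlg {E : Type*} [NormedRing E] [NormedAlgebra ℝ E] : NormedAlgebra ℚ E :=
  NormedAlgebra.restrictScalars ℚ ℝ E

/-- ordered product of exponentials of a list -/
def pe (l : List E) : E := (l.map exp).prod

/-- reversed product of exponentials of negations -/
def pei (l : List E) : E := (l.reverse.map (fun A => exp (-A))).prod

@[simp] lemma pe_nil : pe ([] : List E) = 1 := rfl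

@[simp] lemma pe_cons (A : E) (l : List E) : pe (A :: l) = exp A * pe l := by
  simp [pe]

@[simp] lemma pei_nil : pei ([] : List E) = 1 := rfl

@[simp] lemma pei_cons (A : E) (l : List E) : pei (A :: l) = pei l * exp (-A) := by
  simp [pei]

lemma exp_neg_mul_exp (A : E) : exp (-A) * exp A = 1 := by
  rw [← exp_add_of_commute (Commute.refl A).neg_left]
  simp

lemma exp_mul_exp_neg (A : E) : exp A * exp (-A) = 1 := by
  rw [← exp_add_of_commute (Commute.refl A).neg_right]
  simp

lemma pei_mul_pe (l : List E) : pei l * pe l = 1 := by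
  induction l with
  | nil => simp
  | cons A l ih =>
    simp only [pe_cons, pei_cons]
    calc pei l * exp (-A) * (exp A * pe l)
        = pei l * (exp (-A) * exp A) * pe l := by simp only [mul_assoc]
      _ = 1 := by rw [exp_neg_mul_exp, mul_one, ih]

lemma pe_mul_pei (l : List E) : pe l * pei l = 1 := by
  induction l with
  | nil => simp
  | cons A l ih =>
    simp only [pe_cons, pei_cons]
    calc exp A * pe l * (pei l * exp (-A))
        = exp A * (pe l * pei l) * exp (-A) := by rw [mul_assoc, mul_assoc, mul_assoc]
      _ = 1 := by rw [ih, mul_one, exp_mul_exp_neg]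

lemma pe_mul_pei_mul (l : List E) (z : E) : pe l * (pei l * z) = z := by
  rw [← mul_assoc, pe_mul_pei, one_mul]

lemma pe_eq_one {l : List E} (h : ∀ A ∈ l, A = 0) : pe l = 1 := by
  apply List.prod_eq_one
  intro x hx
  rcases List.mem_map.1 hx with ⟨A, hA, rfl⟩
  rw [h A hA, exp_zero]

lemma conj_exp_mem (h : Submodule ℝ E) (hcl : IsClosed (h : Set E))
    (hbr : ∀ x ∈ h, ∀ y ∈ h, x * y - y * x ∈ h)
    {A B : E} (hA : A ∈ h) (hB : B ∈ h) : exp (-A) * B * exp A ∈ h := by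
  classical
  set T : E →L[ℝ] E := ContinuousLinearMap.mul ℝ E A - (ContinuousLinearMap.mul ℝ E).flip A
    with hTdef
  have hT : ∀ z : E, T z = A * z - z * A := by intro z; simp [hTdef]
  -- the function t ↦ exp(tT)(exp(-tA) B exp(tA)) is constant
  set g : ℝ → E := fun t => exp (t • (-A)) * B * exp (t • A) with hgdef
  have hg : ∀ t : ℝ, HasDerivAt g (-(T (g t))) t := by
    intro t
    have hu : HasDerivAt (fun t : ℝ => exp (t • (-A))) ((-A) * exp (t • (-A))) t :=
      hasDerivAt_exp_smul_const' (-A) t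
    have hv : HasDerivAt (fun t : ℝ => exp (t • A)) (exp (t • A) * A) t :=
      hasDerivAt_exp_smul_const A t
    have := (hu.mul_const B).mul hv
    convert this using 1
    · rfl
    rw [hT]
    simp only [hgdef]
    noncomm_ring
  set k : ℝ → E := fun t => exp (t • T) (g t) with hkdef
  have hk : ∀ t : ℝ, HasDerivAt k 0 t := by
    intro t
    have hop : HasDerivAt (fun t : ℝ => exp (t • T)) (exp (t • T) * T) t :=
      hasDerivAt_exp_smul_const T t
    have := hop.clm_apply (hg t)
    convert this using 1
    · rfl
    simp [ContinuousLinearMap.mul_apply]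
  have hkconst : ∀ t : ℝ, k t = B := by
    have : ∀ t : ℝ, k t = k 0 := by
      intro t
      apply is_const_of_deriv_eq_zero (fun u => (hk u).differentiableAt)
      intro u
      exact (hk u).deriv
    intro t
    rw [this t]
    show (exp ((0:ℝ) • T)) (g 0) = B
    have h0 : (0:ℝ) • T = 0 := zero_smul ℝ T
    rw [h0, exp_zero, ContinuousLinearMap.one_apply]
    have hA0 : (0:ℝ) • A = 0 := zero_smul ℝ A
    have hA0' : (0:ℝ) • (-A) = 0 := zero_smul ℝ (-A)
    show exp ((0:ℝ) • (-A)) * B * exp ((0:ℝ) • A) = B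
    rw [hA0, hA0', exp_zero, one_mul, mul_one]
  -- hence  g 1 = exp(-T) B
  have hg1 : exp (-A) * B * exp A = exp (-T) B := by
    have h1 : exp ((1:ℝ) • T) (g 1) = B := hkconst 1
    have h2 : exp (-T) * exp T = 1 := exp_neg_mul_exp T
    have : exp (-T) (exp T (g 1)) = exp (-T) B := by
      rw [one_smul] at h1; rw [h1]
    rw [← ContinuousLinearMap.mul_apply, h2, ContinuousLinearMap.one_apply] at this
    simpa [hgdef] using this
  rw [hg1]
  -- now the series argument
  have hmemiter : ∀ (k : ℕ) (z : E), z ∈ h → ((-T) ^ k) z ∈ h := by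
    intro k
    induction k with
    | zero => intro z hz; simpa using hz
    | succ k ih =>
      intro z hz
      have : ((-T) ^ (k+1)) z = ((-T) ^ k) ((-T) z) := by
        rw [pow_succ, ContinuousLinearMap.mul_apply]
      rw [this]
      apply ih
      have : (-T) z = z * A - A * z := by rw [ContinuousLinearMap.neg_apply, hT]; abel
      rw [this]
      exact hbr z hz A hA
  have hsum : exp (-T) B = ∑' n : ℕ, ((n.factorial : ℝ))⁻¹ • (((-T) ^ n) B) := by
    rw [exp_eq_tsum ℝ]
    have hs : Summable fun n : ℕ => ((n.factorial : ℝ))⁻¹ • (-T) ^ n := expSeries_summable' (𝕂 := ℝ) (-T)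
    have := (ContinuousLinearMap.apply ℝ E B).map_tsum hs
    simp only [_root_.map_smul] at this
    simpa using this
  rw [hsum]
  set F : ℕ → E := fun n => ((n.factorial : ℝ))⁻¹ • (((-T) ^ n) B) with hF
  have hFs : Summable F := by
    have hs : Summable fun n : ℕ => ((n.factorial : ℝ))⁻¹ • (-T) ^ n := expSeries_summable' (𝕂 := ℝ) (-T)
    have := hs.map (ContinuousLinearMap.apply ℝ E B) (ContinuousLinearMap.apply ℝ E B).continuous
    exact this
  have : Filter.Tendsto (fun K : ℕ => ∑ n ∈ Finset.range K, F n) Filter.atTop (nhds (∑' n, F n)) :=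
    hFs.hasSum.tendsto_sum_nat
  refine hcl.mem_of_tendsto this (Filter.Eventually.of_forall fun K => ?_)
  exact Submodule.sum_mem _ fun n _ => Submodule.smul_mem _ _ (hmemiter n B hB)


lemma conj_list_mem (h : Submodule ℝ E) (hcl : IsClosed (h : Set E))
    (hbr : ∀ x ∈ h, ∀ y ∈ h, x * y - y * x ∈ h)
    (l : List E) (hl : ∀ A ∈ l, A ∈ h) {B : E} (hB : B ∈ h) :
    pei l * B * pe l ∈ h := by
  induction l generalizing B with
  | nil => simpa using hB
  | cons A l ih =>
    have h1 : pei (A :: l) * B * pe (A :: l)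
        = pei l * (exp (-A) * B * exp A) * pe l := by
      rw [pei_cons, pe_cons]
      noncomm_ring
    rw [h1]
    exact ih (fun A' hA' => hl A' (List.mem_cons_of_mem _ hA'))
      (conj_exp_mem h hcl hbr (hl A (List.mem_cons_self)) hB)

lemma contDiff_expSmul (A : E) : ContDiff ℝ 1 (fun s : ℝ => exp (s • A)) := by
  rw [contDiff_one_iff_deriv]
  refine ⟨fun s => (hasDerivAt_exp_smul_const A s).differentiableAt, ?_⟩
  have hd : deriv (fun s : ℝ => exp (s • A)) = fun s => exp (s • A) * A := by
    funext s; exact (hasDerivAt_exp_smul_const A s).deriv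
  rw [hd]
  have hc : Continuous (fun s : ℝ => exp (s • A)) :=
    Differentiable.continuous (fun s => (hasDerivAt_exp_smul_const A s).differentiableAt)
  exact hc.mul continuous_const

lemma contDiff_list_prod {F : Type*} [NormedAddCommGroup F] [NormedSpace ℝ F]
    (l : List (F → E)) (hl : ∀ f ∈ l, ContDiff ℝ 1 f) :
    ContDiff ℝ 1 (fun σ => (l.map (fun f => f σ)).prod) := by
  induction l with
  | nil => simpa using contDiff_const
  | cons f l ih =>
    simp only [List.map_cons, List.prod_cons]
    exact (hl f (List.mem_cons_self)).mul (ih fun g hg => hl g (List.mem_cons_of_mem _ hg))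

lemma master (m : ℕ) (X : Fin m → E) {s : Set ℝ} {t : ℝ} (τ : ℝ → Fin m → ℝ) (τ' : Fin m → ℝ)
    (h : ∀ i, HasDerivWithinAt (fun u => τ u i) (τ' i) s t) :
    HasDerivWithinAt (fun u => pe (List.ofFn fun j => τ u j • X j))
      (pe (List.ofFn fun j => τ t j • X j) *
        ∑ i : Fin m, τ' i •
          (pei ((List.ofFn fun j => τ t j • X j).drop ((i : ℕ) + 1)) * X i *
            pe ((List.ofFn fun j => τ t j • X j).drop ((i : ℕ) + 1)))) s t := by
  induction m with
  | zero =>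
      simp only [List.ofFn_zero, pe_nil, Finset.univ_eq_empty, Finset.sum_empty, mul_zero]
      exact hasDerivWithinAt_const t s 1
  | succ m ih =>
      have h0 : HasDerivWithinAt (fun u => exp (τ u 0 • X 0))
          (τ' 0 • (X 0 * exp (τ t 0 • X 0))) s t := by
        have hout : HasDerivAt (fun c : ℝ => exp (c • X 0)) (X 0 * exp (τ t 0 • X 0)) (τ t 0) :=
          hasDerivAt_exp_smul_const' (X 0) (τ t 0)
        exact HasDerivAt.scomp_hasDerivWithinAt t hout (h 0)
      have hrest : HasDerivWithinAt
          (fun u => pe (List.ofFn fun j : Fin m => τ u j.succ • X j.succ))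
          (pe (List.ofFn fun j : Fin m => τ t j.succ • X j.succ) *
            ∑ i : Fin m, τ' i.succ •
              (pei ((List.ofFn fun j : Fin m => τ t j.succ • X j.succ).drop ((i : ℕ) + 1)) *
                X i.succ *
                pe ((List.ofFn fun j : Fin m => τ t j.succ • X j.succ).drop ((i : ℕ) + 1)))) s t :=
        ih (fun j => X j.succ) (fun u j => τ u j.succ) (fun j => τ' j.succ) (fun j => h j.succ)
      have hmul := h0.mul hrest
      have hfun : (fun u => pe (List.ofFn fun j : Fin (m+1) => τ u j • X j)) =
          fun u => exp (τ u 0 • X 0) * pe (List.ofFn fun j : Fin m => τ u j.succ • X j.succ) := by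
        funext u; rw [List.ofFn_succ, pe_cons]
      rw [hfun]
      convert hmul using 1
      · rfl
      simp only [List.ofFn_succ, pe_cons, Fin.sum_univ_succ, Fin.val_succ, Fin.val_zero,
        List.drop_succ_cons, List.drop_zero, zero_add]
      set e0 := exp (τ t 0 • X 0) with he0
      set L' := List.ofFn fun j : Fin m => τ t j.succ • X j.succ with hL'
      set S := ∑ i : Fin m, τ' i.succ •
          (pei (L'.drop ((i : ℕ) + 1)) * X i.succ * pe (L'.drop ((i : ℕ) + 1))) with hS
      have hc : e0 * X 0 = X 0 * e0 :=
        ((((Commute.refl (X 0)).smul_left (τ t 0)).exp_left)).eq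
      have h1 : pe L' * (pei L' * X 0 * pe L') = X 0 * pe L' := by
        rw [mul_assoc (pei L') (X 0) (pe L')]
        exact pe_mul_pei_mul L' _
      rw [mul_add]
      congr 1
      · rw [mul_smul_comm, smul_mul_assoc]
        congr 1
        rw [mul_assoc e0 (pe L'), h1, ← mul_assoc, hc]
      · rw [mul_assoc]

lemma pei_eq_one {l : List E} (h : ∀ A ∈ l, A = 0) : pei l = 1 := by
  apply List.prod_eq_one
  intro x hx
  rcases List.mem_map.1 hx with ⟨A, hA, rfl⟩
  rw [h A (List.mem_reverse.1 hA)]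
  simp

theorem main {E : Type*} [NormedRing E] [NormedAlgebra ℝ E] [CompleteSpace E]
    [FiniteDimensional ℝ E]
    (h𝔥 : Submodule ℝ E) (hbr : ∀ x ∈ h𝔥, ∀ y ∈ h𝔥, x * y - y * x ∈ h𝔥)
    {N : ℕ} (X : Fin N → E) (b : Module.Basis (Fin N) ℝ h𝔥) (hb : ∀ i, (b i : E) = X i) :
    ∃ U ∈ nhds (0 : E), ∀ Y ∈ h𝔥, Y ∈ U → ∃ τ : Fin N → ℝ,
      exp Y = (List.ofFn fun i => exp (τ i • X i)).prod := by
  classical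
  have hXmem : ∀ i, X i ∈ h𝔥 := fun i => hb i ▸ (b i).2
  have hcl : IsClosed (h𝔥 : Set E) := h𝔥.closed_of_finiteDimensional
  -- the coordinate functional
  obtain ⟨q, hq⟩ := h𝔥.exists_isCompl
  set P₀ : E →ₗ[ℝ] (Fin N → ℝ) :=
    (Finsupp.linearEquivFunOnFinite ℝ ℝ (Fin N)).toLinearMap ∘ₗ
      (b.repr.toLinearMap ∘ₗ (h𝔥.linearProjOfIsCompl q hq)) with hP₀def
  set P : E →L[ℝ] (Fin N → ℝ) := LinearMap.toContinuousLinearMap P₀ with hPdef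
  have hPcoe : ∀ z : E, P z = P₀ z := fun z => rfl
  have hPmem : ∀ z : E, ∀ hz : z ∈ h𝔥, P z = ⇑(b.repr ⟨z, hz⟩) := by
    intro z hz
    have hproj : (h𝔥.linearProjOfIsCompl q hq) z = ⟨z, hz⟩ := by
      have := Submodule.linearProjOfIsCompl_apply_left hq ⟨z, hz⟩
      exact this
    rw [hPcoe, hP₀def]
    simp only [LinearMap.coe_comp, Function.comp_apply, LinearEquiv.coe_coe, hproj]
    rfl
  have hPinj : ∀ z ∈ h𝔥, ∀ z' ∈ h𝔥, P z = P z' → z = z' := by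
    intro z hz z' hz' hPz
    have h1 : ⇑(b.repr ⟨z, hz⟩) = ⇑(b.repr ⟨z', hz'⟩) := by
      rw [← hPmem z hz, ← hPmem z' hz', hPz]
    have h3 : (⟨z, hz⟩ : h𝔥) = ⟨z', hz'⟩ := b.repr.injective (DFunLike.coe_injective h1)
    exact congrArg Subtype.val h3
  have hPX : ∀ i, P (X i) = Pi.single i 1 := by
    intro i
    rw [hPmem (X i) (hXmem i)]
    have : (⟨X i, hXmem i⟩ : h𝔥) = b i := Subtype.ext (hb i).symm
    rw [this, b.repr_self]
    exact Finsupp.single_eq_pi_single i 1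
  -- the moving frame
  set w : Fin N → (Fin N → ℝ) → E := fun i σ =>
    pei ((List.ofFn fun j => σ j • X j).drop ((i : ℕ) + 1)) * X i *
      pe ((List.ofFn fun j => σ j • X j).drop ((i : ℕ) + 1)) with hwdef
  have hwmem : ∀ i σ, w i σ ∈ h𝔥 := by
    intro i σ
    apply conj_list_mem h𝔥 hcl hbr
    · intro A hA
      rcases List.mem_ofFn.1 (List.drop_subset _ _ hA) with ⟨j, rfl⟩
      exact Submodule.smul_mem _ _ (hXmem j)
    · exact hXmem i
  have hw0 : ∀ i, w i 0 = X i := by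
    intro i
    have hz : ∀ A ∈ (List.ofFn fun j => (0 : Fin N → ℝ) j • X j).drop ((i : ℕ) + 1), A = (0 : E) := by
      intro A hA
      rcases List.mem_ofFn.1 (List.drop_subset _ _ hA) with ⟨j, rfl⟩
      simp
    rw [hwdef]
    simp only [pe_eq_one hz, pei_eq_one hz, one_mul, mul_one]
  have hpe_drop : ∀ k : ℕ,
      ContDiff ℝ 1 (fun σ : Fin N → ℝ => pe ((List.ofFn fun j => σ j • X j).drop k)) := by
    intro k
    have hrw : (fun σ : Fin N → ℝ => pe ((List.ofFn fun j => σ j • X j).drop k)) =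
        fun σ => ((((List.ofFn fun j => fun σ' : Fin N → ℝ => exp (σ' j • X j)).drop k)).map
          (fun f => f σ)).prod := by
      funext σ
      show ((((List.ofFn fun j => σ j • X j)).drop k).map exp).prod = _
      rw [List.map_drop, List.map_drop, List.map_ofFn, List.map_ofFn]
      rfl
    rw [hrw]
    apply contDiff_list_prod
    intro f hf
    rcases List.mem_ofFn.1 (List.drop_subset _ _ hf) with ⟨j, rfl⟩
    exact (contDiff_expSmul (X j)).comp (ContinuousLinearMap.proj (R := ℝ) (φ := fun _ : Fin N => ℝ) j).contDiff
  have hpei_drop : ∀ k : ℕ,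
      ContDiff ℝ 1 (fun σ : Fin N → ℝ => pei ((List.ofFn fun j => σ j • X j).drop k)) := by
    intro k
    have hrw : (fun σ : Fin N → ℝ => pei ((List.ofFn fun j => σ j • X j).drop k)) =
        fun σ => (((((List.ofFn fun j => fun σ' : Fin N → ℝ =>
            exp (σ' j • -(X j))).drop k)).reverse).map (fun f => f σ)).prod := by
      funext σ
      show (((((List.ofFn fun j => σ j • X j)).drop k).reverse).map
        (fun A => exp (-A))).prod = _
      rw [List.map_reverse, List.map_reverse]
      congr 1
      rw [List.map_drop, List.map_drop, List.map_ofFn, List.map_ofFn]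
      have hfe : ((fun A => exp (-A)) ∘ fun j => σ j • X j) =
          ((fun f => f σ) ∘ fun (j : Fin N) (σ' : Fin N → ℝ) => exp (σ' j • -X j)) := by
        funext j
        show exp (-(σ j • X j)) = exp (σ j • -X j)
        rw [smul_neg]
      rw [hfe]
    rw [hrw]
    apply contDiff_list_prod
    intro f hf
    rcases List.mem_ofFn.1 (List.drop_subset _ _ (List.mem_reverse.1 hf)) with ⟨j, rfl⟩
    exact (contDiff_expSmul (-(X j))).comp (ContinuousLinearMap.proj (R := ℝ) (φ := fun _ : Fin N => ℝ) j).contDiff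
  have hwC : ∀ i, ContDiff ℝ 1 (w i) := by
    intro i
    exact ((hpei_drop _).mul contDiff_const).mul (hpe_drop _)
  -- the coordinate matrix
  set M : (Fin N → ℝ) → ((Fin N → ℝ) →L[ℝ] (Fin N → ℝ)) := fun σ =>
    ∑ i, (ContinuousLinearMap.proj i).smulRight (P (w i σ)) with hMdef
  have hMapp : ∀ σ c, M σ c = ∑ i, c i • P (w i σ) := by
    intro σ c
    rw [hMdef]
    simp [ContinuousLinearMap.sum_apply, ContinuousLinearMap.smulRight_apply]
  have hM0 : M 0 = 1 := by
    apply ContinuousLinearMap.ext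
    intro c
    rw [hMapp]
    funext j
    simp [hw0, hPX, Finset.sum_apply, Pi.single_apply, ContinuousLinearMap.one_apply,
      Finset.sum_ite_eq]
  have hMC : ContDiff ℝ 1 M := by
    rw [hMdef]
    apply ContDiff.sum
    intro i _
    let φ : E →ₗ[ℝ] ((Fin N → ℝ) →L[ℝ] (Fin N → ℝ)) :=
      { toFun := fun z => (ContinuousLinearMap.proj i).smulRight (P z)
        map_add' := fun a c => by
          ext d
          simp [ContinuousLinearMap.smulRight_apply, smul_add]
          ring
        map_smul' := fun r a => by
          ext d
          simp [ContinuousLinearMap.smulRight_apply, smul_comm]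
          ring }
    exact (LinearMap.toContinuousLinearMap φ).contDiff.comp (hwC i)
  set Minv : (Fin N → ℝ) → ((Fin N → ℝ) →L[ℝ] (Fin N → ℝ)) := fun σ => Ring.inverse (M σ)
    with hMinvdef
  have hMinvC : ContDiffAt ℝ 1 Minv 0 := by
    have h1 : ContDiffAt ℝ 1 (Ring.inverse : ((Fin N → ℝ) →L[ℝ] (Fin N → ℝ)) → _) (M 0) := by
      rw [hM0]
      exact contDiffAt_ringInverse (𝕜 := ℝ) (n := 1) 1
    exact h1.comp 0 hMC.contDiffAt
  obtain ⟨K, t0set, ht0, hlip⟩ := hMinvC.exists_lipschitzOnWith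
  -- choose the radius R
  have hU1 : {σ : Fin N → ℝ | IsUnit (M σ)} ∈ nhds (0 : Fin N → ℝ) := by
    have h1 : {x : (Fin N → ℝ) →L[ℝ] (Fin N → ℝ) | IsUnit x} ∈ nhds (M 0) := by
      rw [hM0]; exact Units.nhds 1
    exact hMC.continuous.continuousAt.preimage_mem_nhds h1
  have hU2 : {σ : Fin N → ℝ | ‖Minv σ‖ ≤ 2} ∈ nhds (0 : Fin N → ℝ) := by
    have hinv0 : Minv 0 = 1 := by rw [hMinvdef]; simp only [hM0]; exact Ring.inverse_one _
    have h2 : Metric.closedBall (Minv 0) 1 ∈ nhds (Minv 0) := Metric.closedBall_mem_nhds _ one_pos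
    have h3 := hMinvC.continuousAt.preimage_mem_nhds h2
    refine Filter.mem_of_superset h3 ?_
    intro σ hσ
    simp only [Set.mem_preimage, Metric.mem_closedBall] at hσ
    have h4 : ‖Minv σ‖ - ‖Minv 0‖ ≤ ‖Minv σ - Minv 0‖ := norm_sub_norm_le _ _
    rw [← dist_eq_norm] at h4
    have h5 : ‖Minv 0‖ ≤ 1 := by rw [hinv0]; exact ContinuousLinearMap.norm_id_le
    show ‖Minv σ‖ ≤ 2
    linarith
  obtain ⟨ε, hε, hball⟩ := Metric.mem_nhds_iff.1
    (Filter.inter_mem ht0 (Filter.inter_mem hU1 hU2))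
  set R := ε / 2 with hRdef
  have hR0 : 0 < R := by positivity
  have hsubset : Metric.closedBall (0 : Fin N → ℝ) R ⊆
      t0set ∩ ({σ | IsUnit (M σ)} ∩ {σ | ‖Minv σ‖ ≤ 2}) := by
    refine Set.Subset.trans (Metric.closedBall_subset_ball ?_) hball
    rw [hRdef]; linarith
  -- the neighbourhood U
  refine ⟨P ⁻¹' Metric.ball 0 (R / 4), ?_, ?_⟩
  · apply P.continuous.continuousAt.preimage_mem_nhds
    rw [map_zero]
    exact Metric.ball_mem_nhds _ (by positivity)
  intro Y hY hYU
  set y := P Y with hydef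
  have hy : ‖y‖ < R / 4 := by
    have := hYU
    simp only [Set.mem_preimage, Metric.mem_ball, dist_zero_right] at this
    exact this
  set v : (Fin N → ℝ) → (Fin N → ℝ) := fun σ => Minv σ y with hvdef
  -- Picard-Lindelöf
  have hvbound : ∀ x ∈ Metric.closedBall (0 : Fin N → ℝ) R, ‖v x‖ ≤ R / 2 := by
    intro x hx
    have h2 : ‖Minv x‖ ≤ 2 := (hsubset hx).2.2
    calc ‖Minv x y‖ ≤ ‖Minv x‖ * ‖y‖ := ContinuousLinearMap.le_opNorm _ _
      _ ≤ 2 * (R / 4) := by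
          apply mul_le_mul h2 hy.le (norm_nonneg _) (by norm_num)
      _ = R / 2 := by ring
  have hPL : IsPicardLindelof (fun _ x => v x) (tmin := 0) (tmax := 1) ⟨0, ⟨le_refl 0, zero_le_one⟩⟩
      0 (⟨R, hR0.le⟩ : NNReal) 0 (⟨R / 2, by positivity⟩ : NNReal) (K * ‖y‖₊) := by
    constructor
    · intro t ht
      rw [lipschitzOnWith_iff_dist_le_mul]
      intro x hx x' hx'
      rw [lipschitzOnWith_iff_dist_le_mul] at hlip
      have hd : dist (Minv x) (Minv x') ≤ K * dist x x' :=
        hlip x ((hsubset hx).1) x' ((hsubset hx').1)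
      have h1 : dist (v x) (v x') ≤ dist (Minv x) (Minv x') * ‖y‖ := by
        rw [dist_eq_norm, dist_eq_norm]
        calc ‖Minv x y - Minv x' y‖ = ‖(Minv x - Minv x') y‖ := by
              rw [ContinuousLinearMap.sub_apply]
          _ ≤ ‖Minv x - Minv x'‖ * ‖y‖ := ContinuousLinearMap.le_opNorm _ _
      have h2 : dist (Minv x) (Minv x') * ‖y‖ ≤ K * dist x x' * ‖y‖ :=
        mul_le_mul_of_nonneg_right hd (norm_nonneg _)
      refine le_trans h1 (le_trans h2 ?_)
      push_cast
      rw [mul_right_comm]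
    · intro x hx
      exact continuousOn_const
    · intro t ht x hx
      exact hvbound x hx
    · show R / 2 * max ((1:ℝ) - 0) (0 - 0) ≤ R - ((0:NNReal):ℝ)
      have : max ((1:ℝ) - 0) (0 - 0) = 1 := by norm_num
      rw [this, NNReal.coe_zero]
      linarith
  obtain ⟨σf, hσ0', hσd'⟩ := hPL.exists_eq_forall_mem_Icc_hasDerivWithinAt (x := 0)
    (Metric.mem_closedBall_self le_rfl)
  have hσ0 : σf 0 = 0 := hσ0'
  have hσd : ∀ s ∈ Set.Icc (0:ℝ) 1, HasDerivWithinAt σf (v (σf s)) (Set.Icc 0 1) s := hσd'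
  -- the solution stays in the ball
  have hσcont : ContinuousOn σf (Set.Icc 0 1) := fun s hs => (hσd s hs).continuousWithinAt
  have hstay : ∀ s ∈ Set.Icc (0:ℝ) 1, ‖σf s‖ ≤ R := by
    set A := {c : ℝ | c ∈ Set.Icc (0:ℝ) 1 ∧ ∀ s ∈ Set.Icc (0:ℝ) c, ‖σf s‖ ≤ R} with hAdef
    have hA0 : (0:ℝ) ∈ A := by
      refine ⟨⟨le_refl 0, zero_le_one⟩, ?_⟩
      intro s hs
      have hs0 : s = 0 := le_antisymm hs.2 hs.1
      rw [hs0, hσ0]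
      simpa using hR0.le
    have hAbdd : BddAbove A := ⟨1, fun c hc => hc.1.2⟩
    have hAne : A.Nonempty := ⟨0, hA0⟩
    set c := sSup A with hcdef
    have hc0 : 0 ≤ c := le_csSup hAbdd hA0
    have hc1 : c ≤ 1 := csSup_le hAne fun x hx => hx.1.2
    have hbound : ∀ s ∈ Set.Icc (0:ℝ) c, ‖σf s‖ ≤ R := by
      intro s hs
      by_contra hgt
      push_neg at hgt
      have hs1 : s ∈ Set.Icc (0:ℝ) 1 := ⟨hs.1, hs.2.trans hc1⟩
      have hcontat := hσcont s hs1
      rw [Metric.continuousWithinAt_iff] at hcontat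
      obtain ⟨δ, hδ, hδprop⟩ := hcontat ((‖σf s‖ - R)/2) (by linarith)
      have hsub : ∀ a ∈ A, a ≤ s - δ := by
        intro a ha
        by_contra hlt
        push_neg at hlt
        have has : a < s := by
          by_contra hge
          push_neg at hge
          exact absurd (ha.2 s ⟨hs.1, hge⟩) (not_le.2 hgt)
        have hdist : dist a s < δ := by
          rw [Real.dist_eq, abs_of_nonpos (by linarith)]
          linarith
        have h5 := hδprop ha.1 hdist
        have h6 : ‖σf a‖ ≤ R := ha.2 a ⟨ha.1.1, le_refl a⟩
        have h7 : ‖σf s‖ - ‖σf a‖ ≤ dist (σf a) (σf s) := by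
          rw [dist_comm, dist_eq_norm]
          exact norm_sub_norm_le _ _
        linarith
      have hcle : c ≤ s - δ := csSup_le hAne hsub
      have hsc : s ≤ c := hs.2
      linarith
    have himp : ∀ s ∈ Set.Icc (0:ℝ) c, ‖σf s‖ ≤ R/2 := by
      have hderiv : ∀ x ∈ Set.Icc (0:ℝ) c, HasDerivWithinAt σf (v (σf x)) (Set.Icc 0 c) x :=
        fun x hx => (hσd x ⟨hx.1, hx.2.trans hc1⟩).mono (Set.Icc_subset_Icc le_rfl hc1)
      have hbd : ∀ x ∈ Set.Ico (0:ℝ) c, ‖v (σf x)‖ ≤ R/2 := by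
        intro x hx
        exact hvbound _ (Metric.mem_closedBall.2 (by
          simpa [dist_zero_right] using hbound x ⟨hx.1, hx.2.le⟩))
      have hmvt := norm_image_sub_le_of_norm_deriv_le_segment' hderiv hbd
      intro s hs
      have h8 := hmvt s hs
      rw [hσ0] at h8
      simp only [sub_zero] at h8
      have hs1 : s ≤ 1 := hs.2.trans hc1
      have h9 : R/2 * s ≤ R/2 * 1 := by
        apply mul_le_mul_of_nonneg_left hs1 (by linarith)
      calc ‖σf s‖ ≤ R/2 * s := h8
        _ ≤ R/2 := by linarith
    have hceq : c = 1 := by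
      by_contra hne
      have hclt : c < 1 := lt_of_le_of_ne hc1 hne
      have hccont := hσcont c ⟨hc0, hc1⟩
      rw [Metric.continuousWithinAt_iff] at hccont
      obtain ⟨δ, hδ, hδprop⟩ := hccont (R/4) (by positivity)
      set c' := min 1 (c + δ/2) with hc'def
      have hc'mem : c' ∈ A := by
        refine ⟨⟨le_min zero_le_one (by linarith), min_le_left _ _⟩, ?_⟩
        intro s hs
        rcases le_or_gt s c with hle | hlt
        · exact hbound s ⟨hs.1, hle⟩
        · have hs1 : s ∈ Set.Icc (0:ℝ) 1 := ⟨hs.1, hs.2.trans (min_le_left _ _)⟩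
          have hsd : dist s c < δ := by
            rw [Real.dist_eq, abs_of_nonneg (by linarith)]
            have : s ≤ c + δ/2 := hs.2.trans (min_le_right _ _)
            linarith
          have h9 := hδprop hs1 hsd
          have h10 : ‖σf c‖ ≤ R/2 := himp c ⟨hc0, le_refl c⟩
          have h11 : ‖σf s‖ - ‖σf c‖ ≤ dist (σf s) (σf c) := by
            rw [dist_eq_norm]
            exact norm_sub_norm_le _ _
          linarith
      have h12 : c' ≤ c := le_csSup hAbdd hc'mem
      have h13 : c < c' := lt_min hclt (by linarith)
      linarith
    intro s hs
    apply hbound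
    rw [hceq]
    exact hs
  -- the frame identity
  have hsum_eq : ∀ s ∈ Set.Icc (0:ℝ) 1, (∑ i, v (σf s) i • w i (σf s)) = Y := by
    intro s hs
    have hmem : σf s ∈ Metric.closedBall (0 : Fin N → ℝ) R :=
      Metric.mem_closedBall.2 (by simpa [dist_zero_right] using hstay s hs)
    have hunit : IsUnit (M (σf s)) := (hsubset hmem).2.1
    have humem : (∑ i, v (σf s) i • w i (σf s)) ∈ h𝔥 :=
      Submodule.sum_mem _ fun i _ => Submodule.smul_mem _ _ (hwmem i _)
    apply hPinj _ humem _ hY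
    have h1 : P (∑ i, v (σf s) i • w i (σf s)) = M (σf s) (v (σf s)) := by
      rw [map_sum, hMapp]
      congr 1
      funext i
      rw [_root_.map_smul]
    have h2 : M (σf s) (v (σf s)) = y := by
      have h3 : M (σf s) * Minv (σf s) = 1 := Ring.mul_inverse_cancel _ hunit
      calc M (σf s) (Minv (σf s) y) = (M (σf s) * Minv (σf s)) y := by
            rw [ContinuousLinearMap.mul_apply]
        _ = y := by rw [h3]; rfl
    rw [h1, h2]
  -- the flow of products of exponentials
  set g : ℝ → E := fun u => pe (List.ofFn fun j => σf u j • X j) with hgdef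
  have hgd : ∀ s ∈ Set.Icc (0:ℝ) 1, HasDerivWithinAt g (g s * Y) (Set.Icc 0 1) s := by
    intro s hs
    have hcomp : ∀ i, HasDerivWithinAt (fun u => σf u i) (v (σf s) i) (Set.Icc (0:ℝ) 1) s := by
      intro i
      exact (ContinuousLinearMap.proj i).hasFDerivAt.comp_hasDerivWithinAt s (hσd s hs)
    have := master N X (fun u => σf u) (v (σf s)) hcomp
    rw [← hsum_eq s hs]
    exact this
  -- conclude by uniqueness of the linear ODE
  set e : ℝ → E := fun u => exp (u • (-Y)) with hedef
  have hk : ∀ s ∈ Set.Icc (0:ℝ) 1,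
      HasDerivWithinAt (fun u => g u * e u) 0 (Set.Icc 0 1) s := by
    intro s hs
    have hed : HasDerivWithinAt e ((-Y) * e s) (Set.Icc (0:ℝ) 1) s :=
      (hasDerivAt_exp_smul_const' (-Y) s).hasDerivWithinAt
    have := (hgd s hs).mul hed
    convert this using 1
    show (0 : E) = g s * Y * e s + g s * (-Y * e s)
    noncomm_ring
    rfl
  have hconst := norm_image_sub_le_of_norm_deriv_le_segment'
    (C := 0) (f' := fun _ => (0 : E)) hk (fun x hx => by simp) 1 ⟨zero_le_one, le_refl 1⟩
  have hg0 : g 0 = 1 := by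
    rw [hgdef]
    simp only [hσ0]
    apply pe_eq_one
    intro A hA
    rcases List.mem_ofFn.1 hA with ⟨j, rfl⟩
    simp
  have he0 : e 0 = 1 := by
    rw [hedef]
    show exp ((0:ℝ) • (-Y)) = 1
    rw [zero_smul ℝ, exp_zero]
  have heq : g 1 * e 1 = 1 := by
    have : ‖g 1 * e 1 - g 0 * e 0‖ ≤ 0 := by simpa using hconst
    have h2 : g 1 * e 1 = g 0 * e 0 := by
      have := norm_le_zero_iff.1 this
      exact sub_eq_zero.1 this
    rw [h2, hg0, he0, one_mul]
  have he1 : e 1 = exp (-Y) := by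
    show exp ((1:ℝ) • -Y) = exp (-Y)
    rw [one_smul]
  have hg1 : g 1 = exp Y := by
    have h2 : exp (-Y) * exp Y = 1 := exp_neg_mul_exp Y
    calc g 1 = g 1 * (exp (-Y) * exp Y) := by rw [h2, mul_one]
      _ = (g 1 * e 1) * exp Y := by rw [he1, mul_assoc]
      _ = exp Y := by rw [heq, one_mul]
  refine ⟨σf 1, ?_⟩
  rw [← hg1, hgdef]
  simp only [pe, List.map_ofFn]
  rfl

end Stmt8Aux

attribute [local instance 100] LieRing.ofAssociativeRing
attribute [local instance 100] LieAlgebra.ofAssociativeAlgebra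

/-- canonical coordinates of the second kind. If X₁, …, X_N is a basis of a
real Lie subalgebra 𝔥 of the n×n complex matrices, then there is a neighbourhood U of 0
such that every Y ∈ 𝔥 ∩ U has exp(Y) = exp(τ₁·X₁)·⋯·exp(τ_N·X_N) for some real τᵢ
(product taken in this fixed order). -/
theorem stmt8 (n N : ℕ) (𝔥 : LieSubalgebra ℝ (Matrix (Fin n) (Fin n) ℂ))
    (X : Fin N → Matrix (Fin n) (Fin n) ℂ)
    (b : Module.Basis (Fin N) ℝ 𝔥) (hb : ∀ i, (b i : Matrix (Fin n) (Fin n) ℂ) = X i) :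
    ∃ U ∈ nhds (0 : Matrix (Fin n) (Fin n) ℂ),
      ∀ Y ∈ 𝔥, Y ∈ U →
        ∃ τ : Fin N → ℝ,
          NormedSpace.exp Y = (List.ofFn fun i => NormedSpace.exp (τ i • X i)).prod := by
  letI : SeminormedRing (Matrix (Fin n) (Fin n) ℂ) := Matrix.linftyOpSemiNormedRing
  letI : NormedRing (Matrix (Fin n) (Fin n) ℂ) := Matrix.linftyOpNormedRing
  letI : NormedAlgebra ℝ (Matrix (Fin n) (Fin n) ℂ) := Matrix.linftyOpNormedAlgebra
  letI : NormedAlgebra ℂ (Matrix (Fin n) (Fin n) ℂ) := Matrix.linftyOpNormedAlgebra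
  haveI : FiniteDimensional ℝ (Matrix (Fin n) (Fin n) ℂ) := Module.Finite.trans ℂ _
  haveI : CompleteSpace (Matrix (Fin n) (Fin n) ℂ) := FiniteDimensional.complete ℝ _
  obtain ⟨U, hU, hprop⟩ := Stmt8Aux.main (E := Matrix (Fin n) (Fin n) ℂ) 𝔥.toSubmodule
    (fun x hx y hy => by
      have hlie := 𝔥.lie_mem (x := x) (y := y) hx hy
      have : ⁅x, y⁆ = x * y - y * x := Ring.lie_def x y
      rw [this] at hlie
      exact hlie) X b hb
  refine ⟨U, hU, ?_⟩
  intro Y hY hYU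
  obtain ⟨τ, hτ⟩ := hprop Y hY hYU
  exact ⟨τ, hτ⟩
end
end
end

section
/- Fix real numbers γₙ, γₑ ≥ 0 with γₙ + γₑ > 0 and κ ∈ ℝ. The fifteen 4×4 complex matrices X̂, Ŷ, Ẑ, K̂_X, K̂_Y, K̂_Z, K̂_XX, K̂_YY, K̂_ZZ, X̂_KK, Ŷ_KK, Ẑ_KK, K̂_XY, K̂_YZ, K̂_ZX are linearly independent over ℝ if and only if γₙ ≠ γₑ. -/
open Matrix Kronecker Complex

noncomputable section

set_option maxHeartbeats 4000000 in
/-- the fifteen matrices X̂, Ŷ, Ẑ, K̂_X, K̂_Y, K̂_Z, K̂_XX, K̂_YY, K̂_ZZ,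
X̂_KK, Ŷ_KK, Ẑ_KK, K̂_XY, K̂_YZ, K̂_ZX are linearly independent over ℝ iff γₙ ≠ γₑ. -/
theorem stmt19 (γn γe κ : ℝ) (hn : 0 ≤ γn) (he : 0 ≤ γe) (hsum : 0 < γn + γe) :
    LinearIndependent ℝ
      ![Xhat γn γe κ, Yhat γn γe κ, Zhat γn γe κ, KhatX, KhatY, KhatZ,
        KhatXX, KhatYY, KhatZZ, XhatKK, YhatKK, ZhatKK,
        KhatXY γn γe κ, KhatYZ γn γe κ, KhatZX γn γe κ] ↔ γn ≠ γe := by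
  have hs : γn + γe ≠ 0 := ne_of_gt hsum
  constructor
  · intro hLI
    by_contra hne
    subst hne
    have hc := Fintype.linearIndependent_iff.mp hLI
      ![1,-1,0,0,0,0,0,0,0,1,-1,0,0,0,0] ?_ 0
    · exact one_ne_zero hc
    · have hkey : Xhat γn γn κ - Yhat γn γn κ + (XhatKK - YhatKK) = 0 := by
        unfold Xhat Yhat Xhat0 Yhat0 XhatKK YhatKK
        have hγ : γn ≠ 0 := fun h => hs (by rw [h]; ring)
        match_scalars <;> field_simp <;> ring
      simp only [Fin.sum_univ_succ, Fin.sum_univ_zero, Matrix.cons_val_zero,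
        Matrix.cons_val_succ, zero_smul, one_smul, neg_smul, add_zero, zero_add]
      linear_combination (norm := module) hkey
  · intro hne
    have hd : γe - γn ≠ 0 := sub_ne_zero.mpr (Ne.symm hne)
    have hss : (γn + γe) * (γn + γe) ≠ 0 := mul_ne_zero hs hs
    have hsd : (γn + γe) * (γe - γn) ≠ 0 := mul_ne_zero hs hd
    have hs4 : (γn + γe) * 4 ≠ 0 := mul_ne_zero hs (by norm_num)
    have h2ne : (2:ℝ) ≠ 0 := by norm_num
    have h64ne : (64:ℝ) ≠ 0 := by norm_num
    rw [Fintype.linearIndependent_iff]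
    intro g hg
    have hE : ∀ p q : Fin 2 × Fin 2, (0:ℂ) = g 0 • Xhat γn γe κ p q + (g 1 • Yhat γn γe κ p q
        + (g 2 • Zhat γn γe κ p q + (g 3 • KhatX p q + (g 4 • KhatY p q + (g 5 • KhatZ p q
        + (g 6 • KhatXX p q + (g 7 • KhatYY p q + (g 8 • KhatZZ p q + (g 9 • XhatKK p q
        + (g 10 • YhatKK p q + (g 11 • ZhatKK p q + (g 12 • KhatXY γn γe κ p q
        + (g 13 • KhatYZ γn γe κ p q + g 14 • KhatZX γn γe κ p q))))))))))))) := by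
      intro p q
      have h1 := congrFun (congrFun hg p) q
      rw [Matrix.sum_apply] at h1
      simp only [Fin.sum_univ_succ, Fin.sum_univ_zero, Matrix.cons_val_zero,
        Matrix.cons_val_succ, Matrix.smul_apply, Matrix.zero_apply, add_zero] at h1
      exact h1.symm
    have E00 := hE (0,0) (0,0)
    have E01 := hE (0,0) (0,1)
    have E02 := hE (0,0) (1,0)
    have E03 := hE (0,0) (1,1)
    have E12 := hE (0,1) (1,0)
    have E13 := hE (0,1) (1,1)
    have E22 := hE (1,0) (1,0)
    have E23 := hE (1,0) (1,1)
    have E33 := hE (1,1) (1,1)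
    clear hE hg
    have E00i := congrArg Complex.im E00
    have E01r := congrArg Complex.re E01
    have E01i := congrArg Complex.im E01
    have E02r := congrArg Complex.re E02
    have E02i := congrArg Complex.im E02
    have E03r := congrArg Complex.re E03
    have E03i := congrArg Complex.im E03
    have E12r := congrArg Complex.re E12
    have E12i := congrArg Complex.im E12
    have E13r := congrArg Complex.re E13
    have E13i := congrArg Complex.im E13
    have E22i := congrArg Complex.im E22
    have E23r := congrArg Complex.re E23
    have E23i := congrArg Complex.im E23
    have E33i := congrArg Complex.im E33
    clear E00 E01 E02 E03 E12 E13 E22 E23 E33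
    simp only [Xhat, Yhat, Zhat, Xhat0, Yhat0, Zhat0, Khat, KhatX, KhatY,
      KhatZ, KhatXX, KhatYY, KhatZZ, XhatKK, YhatKK, ZhatKK, KhatXY, KhatYZ, KhatZX,
      m1, mI, mJ, mK, Matrix.one_apply, kroneckerMap_apply, Matrix.add_apply,
      Matrix.sub_apply, Matrix.smul_apply, Matrix.neg_apply, Complex.real_smul,
      Matrix.cons_val', Matrix.cons_val_zero, Matrix.cons_val_one, Matrix.head_cons,
      Matrix.head_fin_const, Matrix.empty_val', Matrix.cons_val_fin_one,
      Complex.add_re, Complex.add_im, Complex.mul_re, Complex.mul_im, Complex.neg_re,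
      Complex.neg_im, Complex.sub_re, Complex.sub_im, Complex.zero_re, Complex.zero_im,
      Complex.one_re, Complex.one_im, Complex.I_re, Complex.I_im, Complex.ofReal_re,
      Complex.ofReal_im, Complex.div_re, Complex.div_im, Complex.normSq_apply,
      Complex.smul_re, Complex.smul_im, smul_eq_mul, mul_zero, zero_mul, mul_one, one_mul,
      mul_neg, neg_neg, neg_zero, add_zero, zero_add, sub_zero, zero_sub, zero_div,
      if_true, if_false, reduceIte, Fin.isValue, Matrix.of_apply, Fin.reduceEq,
      Complex.re_ofNat, Complex.im_ofNat]
      at E00i E01r E01i E02r E02i E03r E03i E12r E12i E13r E13i E22i E23r E23i E33i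
    field_simp at E00i E01r E01i E02r E02i E03r E03i E12r E12i E13r E13i E22i E23r E23i E33i
    have h12 : g 12 = 0 := (mul_eq_zero.mp (show g 12 * (γn + γe) = 0 by linear_combination E03r)).resolve_right hs
    have h5x : g 5 * (γn + γe) = 0 := by linear_combination (-1/2) * E12r + ((1/2) * γe + (-1/2) * γn) * h12
    have h5 : g 5 = 0 := (mul_eq_zero.mp h5x).resolve_right hs
    have h13x : g 13 * ((γn + γe) * (γn + γe)) = 0 := by linear_combination ((γn + γe)/2) * E01r + ((γn + γe)/2) * E02r + (-(γn + γe)/2) * E13r + (-(γn + γe)/2) * E23r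
    have h13 : g 13 = 0 := (mul_eq_zero.mp h13x).resolve_right hss
    have h1x : g 1 * ((γn + γe) * (γe - γn)) = 0 := by linear_combination (-(γn + γe)/4) * E01r + (-(γn + γe)/4) * E02r + (-(γn + γe)/4) * E13r + (-(γn + γe)/4) * E23r
    have h1 : g 1 = 0 := (mul_eq_zero.mp h1x).resolve_right hsd
    have h3x : g 3 * ((γn + γe) * (γn + γe)) = 0 := by linear_combination (-(γn + γe)/2) * E01r + (-(γn + γe)/2) * E13r + (-(γn + γe) * (γe - γn)) * h1 + ((γn + γe) * (γe - γn) / 2) * h13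
    have h3 : g 3 = 0 := (mul_eq_zero.mp h3x).resolve_right hss
    have h10x : g 10 * ((γn + γe) * (γn + γe)) = 0 := by linear_combination ((γn + γe)/2) * E01r + (-(γn + γe)/2) * E13r + ((γn + γe) * (γn + γe)) * h1 + (-(γn + γe) * (γn + γe) * (1 - 2 * κ) / 2) * h13
    have h10 : g 10 = 0 := (mul_eq_zero.mp h10x).resolve_right hss
    have h14x : g 14 * ((γn + γe) * (γn + γe)) = 0 := by linear_combination ((γn + γe)/2) * E01i + ((γn + γe)/2) * E02i + (-(γn + γe)/2) * E13i + (-(γn + γe)/2) * E23i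
    have h14 : g 14 = 0 := (mul_eq_zero.mp h14x).resolve_right hss
    have h0x : g 0 * ((γn + γe) * (γe - γn)) = 0 := by linear_combination (-(γn + γe)/4) * E01i + (-(γn + γe)/4) * E02i + (-(γn + γe)/4) * E13i + (-(γn + γe)/4) * E23i
    have h0 : g 0 = 0 := (mul_eq_zero.mp h0x).resolve_right hsd
    have h4x : g 4 * ((γn + γe) * (γn + γe)) = 0 := by linear_combination ((γn + γe)/2) * E01i + ((γn + γe)/2) * E13i + ((γn + γe) * (γe - γn)) * h0 + ((γn + γe) * (γe - γn) / 2) * h14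
    have h4 : g 4 = 0 := (mul_eq_zero.mp h4x).resolve_right hss
    have h9x : g 9 * ((γn + γe) * (γn + γe)) = 0 := by linear_combination ((γn + γe)/2) * E01i + (-(γn + γe)/2) * E13i + ((γn + γe) * (γn + γe)) * h0 + (κ * (γn + γe) * (γn + γe)) * h12 + (-(γn + γe) * (γn + γe) / 2) * h14
    have h9 : g 9 = 0 := (mul_eq_zero.mp h9x).resolve_right hss
    have h2x : g 2 * (γe - γn) = 0 := by linear_combination (-1/4) * E00i + (1/4) * E33i
    have h2 : g 2 = 0 := (mul_eq_zero.mp h2x).resolve_right hd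
    have h6x : g 6 * ((γn + γe) * 4) = 0 := by linear_combination (-1) * E00i + (-1) * E33i + (2 * (γn + γe)) * E03i + (2 * γe * κ + 2 * γn * κ) * h0 + (2 * γe * κ + 2 * γn * κ) * h1 + (2 * γe * κ + 2 * γn * κ) * h2
    have h6 : g 6 = 0 := (mul_eq_zero.mp h6x).resolve_right hs4
    have h7x : g 7 * ((γn + γe) * 4) = 0 := by linear_combination (-1) * E00i + (-1) * E33i + (-2 * (γn + γe)) * E03i + (2 * γe * κ + 2 * γn * κ) * h0 + (2 * γe * κ + 2 * γn * κ) * h1 + (2 * γe * κ + 2 * γn * κ) * h2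
    have h7 : g 7 = 0 := (mul_eq_zero.mp h7x).resolve_right hs4
    have h8x : g 8 * (2) = 0 := by linear_combination ((-1)) * E12i + (2 * κ) * h0 + (2 * κ) * h1 + (2 * κ) * h2 + ((-1)) * h6 + ((-1)) * h7
    have h8 : g 8 = 0 := (mul_eq_zero.mp h8x).resolve_right h2ne
    have h11x : g 11 * (64) = 0 := by linear_combination (32) * E22i + (32 * κ) * h0 + (32 * κ) * h1 + (64 + 32 * κ) * h2 + ((-32)) * h6 + ((-32)) * h7 + (64 * κ) * h14
    have h11 : g 11 = 0 := (mul_eq_zero.mp h11x).resolve_right h64ne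
    intro i
    fin_cases i <;> assumption
end
end
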